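/- arXiv:2007.06455 — 7 statements merged into one kernel-verified Lean document; each statement's English description precedes it below -/
import Mathlib

section
/- A colouring φ: V(G) → ℕ of a graph G is an ℓ-ranking of G if and only if, for every induced path u₀,…,u_p in G of length at most ℓ (p ≥ 1), either φ(u₀) ≠ φ(u_p) or φ(u₀) < max{φ(u₀),…,φ(u_p)}. -/
open SimpleGraph

variable {V : Type*}

/-- A colouring `φ` is an `ℓ`-ranking: for every path `u₀,…,u_p` with `1 ≤ p ≤ ℓ`,
either the endpoints get different colours, or some vertex of the path gets a colour
strictly larger than that of the endpoints. -/
def IsLRanking (G : SimpleGraph V) (ℓ : ℕ) (φ : V → ℕ) : Prop :=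
  ∀ ⦃u v : V⦄ (p : G.Walk u v), p.IsPath → 1 ≤ p.length → p.length ≤ ℓ →
    φ u ≠ φ v ∨ ∃ w ∈ p.support, φ u < φ w

/-- A path is induced if the subgraph induced by its vertex set is the path itself:
any edge of `G` between vertices of the path is an edge of the path. -/
def IsInducedPath (G : SimpleGraph V) {u v : V} (p : G.Walk u v) : Prop :=
  p.IsPath ∧ ∀ a b : V, a ∈ p.support → b ∈ p.support → G.Adj a b → s(a, b) ∈ p.edges

private lemma edge_of_length_one {G : SimpleGraph V} {a b : V} (w : G.Walk a b)
    (h : w.length = 1) : s(a, b) ∈ w.edges := by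
  cases w with
  | nil => simp at h
  | cons hadj q =>
    have hq : q.length = 0 := by simpa using h
    have := q.eq_of_length_eq_zero hq
    subst this
    simp

/-- If a path has a chord (a `G`-edge between two of its vertices not used by the path),
then there is a strictly shorter walk between the same endpoints inside its support. -/
private lemma shortcut {G : SimpleGraph V} [DecidableEq V] {u v : V} (p : G.Walk u v)
    {a b : V} (ha : a ∈ p.support) (hb : b ∈ p.support) (hab : G.Adj a b)
    (hne : s(a, b) ∉ p.edges) :
    ∃ q : G.Walk u v, q.support ⊆ p.support ∧ q.length < p.length := by
  have hsplit : p.support = (p.takeUntil a ha).support ++ (p.dropUntil a ha).support.tail :=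
    by rw [← SimpleGraph.Walk.support_append, SimpleGraph.Walk.take_spec]
  have hlenp : (p.takeUntil a ha).length + (p.dropUntil a ha).length = p.length := by
    rw [← SimpleGraph.Walk.length_append, SimpleGraph.Walk.take_spec]
  have hbcases : b ∈ (p.takeUntil a ha).support ∨ b ∈ (p.dropUntil a ha).support := by
    rw [← SimpleGraph.Walk.take_spec p ha, SimpleGraph.Walk.mem_support_append_iff] at hb
    exact hb
  rcases hbcases with hb' | hb'
  · -- b occurs before a: go along p to b, jump to a, continue along p
    set t := p.takeUntil a ha with ht
    refine ⟨(t.takeUntil b hb').append (SimpleGraph.Walk.cons hab.symm (p.dropUntil a ha)),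
      ?_, ?_⟩
    · intro x hx
      rw [SimpleGraph.Walk.mem_support_append_iff] at hx
      rcases hx with hx | hx
      · exact SimpleGraph.Walk.support_takeUntil_subset p ha
          (SimpleGraph.Walk.support_takeUntil_subset t hb' hx)
      · rw [SimpleGraph.Walk.support_cons] at hx
        rcases List.mem_cons.mp hx with rfl | hx
        · exact hb
        · exact SimpleGraph.Walk.support_dropUntil_subset p ha hx
    · have hlent : (t.takeUntil b hb').length + (t.dropUntil b hb').length = t.length := by
        rw [← SimpleGraph.Walk.length_append, SimpleGraph.Walk.take_spec]
      have h2 : 2 ≤ (t.dropUntil b hb').length := by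
        by_contra hlt
        push_neg at hlt
        interval_cases h : (t.dropUntil b hb').length
        · exact hab.ne (SimpleGraph.Walk.eq_of_length_eq_zero h).symm
        · have := edge_of_length_one _ h
          rw [Sym2.eq_swap] at this
          exact hne (SimpleGraph.Walk.edges_takeUntil_subset p ha
            (SimpleGraph.Walk.edges_dropUntil_subset t hb' this))
      rw [SimpleGraph.Walk.length_append, SimpleGraph.Walk.length_cons]
      omega
  · -- b occurs after a: go along p to a, jump to b, continue along p
    set d := p.dropUntil a ha with hd
    refine ⟨(p.takeUntil a ha).append (SimpleGraph.Walk.cons hab (d.dropUntil b hb')),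
      ?_, ?_⟩
    · intro x hx
      rw [SimpleGraph.Walk.mem_support_append_iff] at hx
      rcases hx with hx | hx
      · exact SimpleGraph.Walk.support_takeUntil_subset p ha hx
      · rw [SimpleGraph.Walk.support_cons] at hx
        rcases List.mem_cons.mp hx with rfl | hx
        · exact ha
        · exact SimpleGraph.Walk.support_dropUntil_subset p ha
            (SimpleGraph.Walk.support_dropUntil_subset d hb' hx)
    · have hlend : (d.takeUntil b hb').length + (d.dropUntil b hb').length = d.length := by
        rw [← SimpleGraph.Walk.length_append, SimpleGraph.Walk.take_spec]
      have h2 : 2 ≤ (d.takeUntil b hb').length := by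
        by_contra hlt
        push_neg at hlt
        interval_cases h : (d.takeUntil b hb').length
        · exact hab.ne (SimpleGraph.Walk.eq_of_length_eq_zero h)
        · have := edge_of_length_one _ h
          exact hne (SimpleGraph.Walk.edges_dropUntil_subset p ha
            (SimpleGraph.Walk.edges_takeUntil_subset d hb' this))
      rw [SimpleGraph.Walk.length_append, SimpleGraph.Walk.length_cons]
      omega

theorem induced_paths_only (G : SimpleGraph V) (ℓ : ℕ) (φ : V → ℕ) :
    IsLRanking G ℓ φ ↔
      ∀ ⦃u v : V⦄ (p : G.Walk u v), IsInducedPath G p → 1 ≤ p.length → p.length ≤ ℓ →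
        φ u ≠ φ v ∨ ∃ w ∈ p.support, φ u < φ w := by
  classical
  constructor
  · intro h u v p hp h1 hℓ
    exact h p hp.1 h1 hℓ
  · intro h
    suffices H : ∀ n, ∀ ⦃u v : V⦄ (p : G.Walk u v), p.length ≤ n → p.IsPath →
        1 ≤ p.length → p.length ≤ ℓ → φ u ≠ φ v ∨ ∃ w ∈ p.support, φ u < φ w by
      intro u v p hp h1 hℓ
      exact H p.length p le_rfl hp h1 hℓ
    intro n
    induction n with
    | zero => intro u v p hpn _ h1 _; omega
    | succ n ih =>
      intro u v p hpn hp h1 hℓ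
      by_cases hind : IsInducedPath G p
      · exact h p hind h1 hℓ
      · have : ∃ a b, a ∈ p.support ∧ b ∈ p.support ∧ G.Adj a b ∧ s(a, b) ∉ p.edges := by
          by_contra hc
          push_neg at hc
          exact hind ⟨hp, fun a b ha hb hab => hc a b ha hb hab⟩
        obtain ⟨a, b, ha, hb, hab, hne⟩ := this
        obtain ⟨q, hsub, hlen⟩ := shortcut p ha hb hab hne
        have huv : u ≠ v := by
          rintro rfl
          have := SimpleGraph.Walk.isPath_iff_eq_nil.mp hp
          subst this
          simp at h1
        have hb1 : 1 ≤ q.bypass.length := by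
          rcases Nat.eq_zero_or_pos q.bypass.length with h0 | h0
          · exact absurd (SimpleGraph.Walk.eq_of_length_eq_zero h0) huv
          · exact h0
        have hble : q.bypass.length ≤ q.length := SimpleGraph.Walk.length_bypass_le q
        have := ih q.bypass (by omega) (SimpleGraph.Walk.bypass_isPath q) hb1 (by omega)
        rcases this with h' | ⟨w, hw, hφ⟩
        · exact Or.inl h'
        · exact Or.inr ⟨w, hsub (SimpleGraph.Walk.support_bypass_subset q hw), hφ⟩
end

section
/- For any two graphs G₁ and G₂ and any integer ℓ ≥ 1, the ℓ-ranking number of the strong product satisfies χ_ℓ(G₁ ⊠ G₂) ≤ χ_ℓ(G₁) · χ̄_ℓ(G₂), where χ̄_ℓ denotes the distance-ℓ colouring number. -/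
open SimpleGraph

variable {V : Type*}

noncomputable def rankingNumber (G : SimpleGraph V) (ℓ : ℕ) : ℕ :=
  sInf {k | ∃ φ : V → ℕ, IsLRanking G ℓ φ ∧ ∀ v, φ v ∈ Finset.Icc 1 k}

/-- A distance-`ℓ` colouring: endpoints of every non-trivial path of length at most `ℓ`
receive distinct colours. -/
def IsDistColoring (G : SimpleGraph V) (ℓ : ℕ) (φ : V → ℕ) : Prop :=
  ∀ ⦃u v : V⦄ (p : G.Walk u v), p.IsPath → 1 ≤ p.length → p.length ≤ ℓ → φ u ≠ φ v

noncomputable def distColoringNumber (G : SimpleGraph V) (ℓ : ℕ) : ℕ :=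
  sInf {k | ∃ φ : V → ℕ, IsDistColoring G ℓ φ ∧ ∀ v, φ v ∈ Finset.Icc 1 k}

/-- The strong graph product `G₁ ⊠ G₂`. -/
def strongProd {α β : Type*} (G : SimpleGraph α) (H : SimpleGraph β) :
    SimpleGraph (α × β) where
  Adj x y := x ≠ y ∧ (x.1 = y.1 ∨ G.Adj x.1 y.1) ∧ (x.2 = y.2 ∨ H.Adj x.2 y.2)
  symm := ⟨by
    rintro x y ⟨hne, h1, h2⟩
    exact ⟨hne.symm, h1.imp Eq.symm (fun h => h.symm), h2.imp Eq.symm (fun h => h.symm)⟩⟩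
  loopless := ⟨fun x h => h.1 rfl⟩

attribute [local instance] Classical.propDecidable

lemma walk_ne_of_path {G : SimpleGraph V} {u v : V} (p : G.Walk u v)
    (hp : p.IsPath) (h1 : 1 ≤ p.length) : u ≠ v := by
  rintro rfl
  cases p with
  | nil => simp at h1
  | cons h q =>
    have hn := hp.support_nodup
    rw [Walk.support_cons] at hn
    exact (List.nodup_cons.mp hn).1 q.end_mem_support

noncomputable def projW1 {α β : Type*} {G₁ : SimpleGraph α} {G₂ : SimpleGraph β} :
    ∀ {u v : α × β}, (strongProd G₁ G₂).Walk u v → G₁.Walk u.1 v.1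
  | _, _, Walk.nil => Walk.nil
  | u, _, Walk.cons h p =>
    if heq : u.1 = _ then (projW1 p).copy heq.symm rfl
    else Walk.cons ((show u ≠ _ ∧ (u.1 = _ ∨ G₁.Adj u.1 _) ∧ (u.2 = _ ∨ G₂.Adj u.2 _) from h).2.1.resolve_left heq) (projW1 p)

noncomputable def projW2 {α β : Type*} {G₁ : SimpleGraph α} {G₂ : SimpleGraph β} :
    ∀ {u v : α × β}, (strongProd G₁ G₂).Walk u v → G₂.Walk u.2 v.2
  | _, _, Walk.nil => Walk.nil
  | u, _, Walk.cons h p =>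
    if heq : u.2 = _ then (projW2 p).copy heq.symm rfl
    else Walk.cons ((show u ≠ _ ∧ (u.1 = _ ∨ G₁.Adj u.1 _) ∧ (u.2 = _ ∨ G₂.Adj u.2 _) from h).2.2.resolve_left heq) (projW2 p)

lemma projW1_length_le {α β : Type*} {G₁ : SimpleGraph α} {G₂ : SimpleGraph β} :
    ∀ {u v : α × β} (p : (strongProd G₁ G₂).Walk u v), (projW1 p).length ≤ p.length
  | _, _, Walk.nil => le_refl _
  | u, _, Walk.cons h p => by
    rw [projW1]
    split
    · simp [Walk.length_copy]
      exact le_trans (projW1_length_le p) (Nat.le_succ _)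
    · simp [Walk.length_cons]
      exact projW1_length_le p

lemma projW2_length_le {α β : Type*} {G₁ : SimpleGraph α} {G₂ : SimpleGraph β} :
    ∀ {u v : α × β} (p : (strongProd G₁ G₂).Walk u v), (projW2 p).length ≤ p.length
  | _, _, Walk.nil => le_refl _
  | u, _, Walk.cons h p => by
    rw [projW2]
    split
    · simp [Walk.length_copy]
      exact le_trans (projW2_length_le p) (Nat.le_succ _)
    · simp [Walk.length_cons]
      exact projW2_length_le p

lemma projW1_support {α β : Type*} {G₁ : SimpleGraph α} {G₂ : SimpleGraph β} :
    ∀ {u v : α × β} (p : (strongProd G₁ G₂).Walk u v) (w : α),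
      w ∈ (projW1 p).support → ∃ b, (w, b) ∈ p.support
  | u, _, Walk.nil, w, hw => by
    simp [projW1] at hw
    exact ⟨u.2, by simp [hw]⟩
  | u, x, Walk.cons h p, w, hw => by
    rw [projW1] at hw
    split at hw
    · rw [Walk.support_copy] at hw
      obtain ⟨b, hb⟩ := projW1_support p w hw
      exact ⟨b, by simp [Walk.support_cons, hb]⟩
    · rw [Walk.support_cons] at hw
      rcases List.mem_cons.mp hw with hw | hw
      · exact ⟨u.2, by simp [Walk.support_cons, hw]⟩
      · obtain ⟨b, hb⟩ := projW1_support p w hw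
        exact ⟨b, by simp [Walk.support_cons, hb]⟩

lemma ranking_set_nonempty {α : Type*} [Fintype α] (G : SimpleGraph α) (ℓ : ℕ) :
    {k | ∃ φ : α → ℕ, IsLRanking G ℓ φ ∧ ∀ v, φ v ∈ Finset.Icc 1 k}.Nonempty := by
  classical
  refine ⟨Fintype.card α, fun v => (Fintype.equivFin α v).val + 1, ?_, ?_⟩
  · intro u v p hp h1 _
    left
    intro h
    have h' : (Fintype.equivFin α u).val + 1 = (Fintype.equivFin α v).val + 1 := h
    have : Fintype.equivFin α u = Fintype.equivFin α v := Fin.ext (by omega)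
    exact walk_ne_of_path p hp h1 ((Fintype.equivFin α).injective this)
  · intro v
    have := (Fintype.equivFin α v).isLt
    simp [Finset.mem_Icc]

lemma dist_set_nonempty {α : Type*} [Fintype α] (G : SimpleGraph α) (ℓ : ℕ) :
    {k | ∃ φ : α → ℕ, IsDistColoring G ℓ φ ∧ ∀ v, φ v ∈ Finset.Icc 1 k}.Nonempty := by
  classical
  refine ⟨Fintype.card α, fun v => (Fintype.equivFin α v).val + 1, ?_, ?_⟩
  · intro u v p hp h1 _ h
    have h' : (Fintype.equivFin α u).val + 1 = (Fintype.equivFin α v).val + 1 := h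
    have : Fintype.equivFin α u = Fintype.equivFin α v := Fin.ext (by omega)
    exact walk_ne_of_path p hp h1 ((Fintype.equivFin α).injective this)
  · intro v
    have := (Fintype.equivFin α v).isLt
    simp [Finset.mem_Icc]

lemma decomp_eq {k a a' b b' : ℕ} (hb : 1 ≤ b) (hb2 : b ≤ k) (hb' : 1 ≤ b') (hb2' : b' ≤ k)
    (h : a * k + b = a' * k + b') : a = a' ∧ b = b' := by
  rcases lt_trichotomy a a' with h1 | h1 | h1
  · exfalso
    have : a + 1 ≤ a' := h1
    nlinarith
  · subst h1
    exact ⟨rfl, by omega⟩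
  · exfalso
    have : a' + 1 ≤ a := h1
    nlinarith

/-- `χ_ℓ(G₁ ⊠ G₂) ≤ χ_ℓ(G₁) · χ̄_ℓ(G₂)`. -/
theorem ranking_strongProd {α β : Type*} [Fintype α] [Fintype β]
    (G₁ : SimpleGraph α) (G₂ : SimpleGraph β) (ℓ : ℕ) (hℓ : 1 ≤ ℓ) :
    rankingNumber (strongProd G₁ G₂) ℓ ≤ rankingNumber G₁ ℓ * distColoringNumber G₂ ℓ := by
  classical
  set k₁ := rankingNumber G₁ ℓ with hk₁
  set k₂ := distColoringNumber G₂ ℓ with hk₂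
  obtain ⟨φ₁, h₁, hb₁⟩ := Nat.sInf_mem (ranking_set_nonempty G₁ ℓ)
  obtain ⟨φ₂, h₂, hb₂⟩ := Nat.sInf_mem (dist_set_nonempty G₂ ℓ)
  have hb₁ : ∀ v, φ₁ v ∈ Finset.Icc 1 k₁ := hb₁
  have hb₂ : ∀ v, φ₂ v ∈ Finset.Icc 1 k₂ := hb₂
  simp only [Finset.mem_Icc] at hb₁ hb₂
  apply Nat.sInf_le
  refine ⟨fun x => (φ₁ x.1 - 1) * k₂ + φ₂ x.2, ?_, ?_⟩
  · -- ranking property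
    intro u v p hp h1 h2
    show (φ₁ u.1 - 1) * k₂ + φ₂ u.2 ≠ (φ₁ v.1 - 1) * k₂ + φ₂ v.2 ∨
      ∃ w ∈ p.support, (φ₁ u.1 - 1) * k₂ + φ₂ u.2 < (φ₁ w.1 - 1) * k₂ + φ₂ w.2
    by_cases hne : (φ₁ u.1 - 1) * k₂ + φ₂ u.2 ≠ (φ₁ v.1 - 1) * k₂ + φ₂ v.2
    · exact Or.inl hne
    · push_neg at hne
      right
      have huv : u ≠ v := walk_ne_of_path p hp h1
      have hdec := decomp_eq (hb₂ u.2).1 (hb₂ u.2).2 (hb₂ v.2).1 (hb₂ v.2).2 hne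
      have hφ2 : φ₂ u.2 = φ₂ v.2 := hdec.2
      have hφ1 : φ₁ u.1 = φ₁ v.1 := by
        have := hdec.1
        have h1u := (hb₁ u.1).1
        have h1v := (hb₁ v.1).1
        omega
      -- second coordinates must be equal
      have h2eq : u.2 = v.2 := by
        by_contra h2ne
        refine h₂ ((projW2 p).bypass) (Walk.bypass_isPath _) ?_ ?_ hφ2
        · rcases Nat.eq_zero_or_pos (projW2 p).bypass.length with h0 | h0
          · exact absurd (Walk.eq_of_length_eq_zero h0) h2ne
          · exact h0
        · exact le_trans (Walk.length_bypass_le _) (le_trans (projW2_length_le p) h2)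
      have h1ne : u.1 ≠ v.1 := fun h => huv (Prod.ext h h2eq)
      have hql : (projW1 p).bypass.length ≤ ℓ := le_trans (Walk.length_bypass_le _)
        (le_trans (projW1_length_le p) h2)
      have hq1 : 1 ≤ (projW1 p).bypass.length := by
        rcases Nat.eq_zero_or_pos (projW1 p).bypass.length with h0 | h0
        · exact absurd (Walk.eq_of_length_eq_zero h0) h1ne
        · exact h0
      rcases h₁ ((projW1 p).bypass) (Walk.bypass_isPath _) hq1 hql with hc | ⟨w, hwmem, hwlt⟩
      · exact absurd hφ1 hc
      · have hwmem' : w ∈ (projW1 p).support := Walk.support_bypass_subset _ hwmem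
        obtain ⟨b, hb⟩ := projW1_support p w hwmem'
        refine ⟨(w, b), hb, ?_⟩
        have hA := (hb₁ u.1).1
        have hW : φ₁ u.1 + 1 ≤ φ₁ w := hwlt
        have hbu := (hb₂ u.2)
        have hbb := (hb₂ b)
        obtain ⟨a, ha⟩ : ∃ a, φ₁ u.1 = a + 1 := ⟨φ₁ u.1 - 1, by omega⟩
        obtain ⟨d, hd⟩ : ∃ d, φ₁ w = a + 1 + (d + 1) := ⟨φ₁ w - φ₁ u.1 - 1, by omega⟩
        simp only [ha, hd, Nat.add_sub_cancel]
        have : (a + 1 + (d + 1) - 1) = a + d + 1 := by omega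
        rw [this]
        nlinarith [hbu.1, hbu.2, hbb.1]
  · intro v
    have h1v := hb₁ v.1
    have h2v := hb₂ v.2
    refine Finset.mem_Icc.mpr ⟨?_, ?_⟩
    · show 1 ≤ (φ₁ v.1 - 1) * k₂ + φ₂ v.2
      have : 1 ≤ φ₂ v.2 := h2v.1
      omega
    · show (φ₁ v.1 - 1) * k₂ + φ₂ v.2 ≤ k₁ * k₂
      obtain ⟨a, ha⟩ : ∃ a, φ₁ v.1 = a + 1 := ⟨φ₁ v.1 - 1, by omega⟩
      rw [ha, Nat.add_sub_cancel]
      have haK : a + 1 ≤ k₁ := ha ▸ h1v.2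
      nlinarith [h2v.2, h2v.1]
end

section
/- Let h, k ≥ 1 be integers, let U be a graph with 2-ranking number χ₂(U) ≥ h, and let G be obtained from k+1 disjoint copies U₀,…,U_k of U by adding a new apex vertex a adjacent to every vertex of every copy. Then for any integer k₀ ∈ {1,…,k} and any 2-ranking φ of G using only colours in {k₀,…,k} on the copies U₀,…,U_k, we have φ(a) ≥ k₀ + h. -/
open SimpleGraph

variable {V : Type*}

/-- The graph obtained from `k+1` disjoint copies of `U` by adding an apex vertex
(the vertex `none`) adjacent to every vertex of every copy. -/
def apexCopies {α : Type*} (U : SimpleGraph α) (k : ℕ) :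
    SimpleGraph (Option (Fin (k + 1) × α)) where
  Adj x y :=
    (x = none ∧ y ≠ none) ∨ (y = none ∧ x ≠ none) ∨
      (∃ (i : Fin (k + 1)) (u v : α), x = some (i, u) ∧ y = some (i, v) ∧ U.Adj u v)
  symm := by
    constructor
    rintro x y (⟨h1, h2⟩ | ⟨h1, h2⟩ | ⟨i, u, v, h1, h2, h3⟩)
    · exact Or.inr (Or.inl ⟨h1, h2⟩)
    · exact Or.inl ⟨h1, h2⟩
    · exact Or.inr (Or.inr ⟨i, v, u, h2, h1, h3.symm⟩)
  loopless := by
    constructor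
    rintro x (⟨h1, h2⟩ | ⟨h1, h2⟩ | ⟨i, u, v, h1, h2, h3⟩)
    · exact h2 h1
    · exact h2 h1
    · rw [h1] at h2
      simp only [Option.some.injEq, Prod.mk.injEq] at h2
      exact h3.ne h2.2

/-- If `χ₂(U) ≥ h` and `φ` is a 2-ranking of the apex graph whose colours on the copies
lie in `{k₀,…,k}`, then the apex gets colour at least `k₀ + h`. -/
theorem apex_lower_bound {α : Type*} [Fintype α] (U : SimpleGraph α) (h k : ℕ)
    (hh : 1 ≤ h) (hk : 1 ≤ k) (hU : h ≤ rankingNumber U 2)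
    (k₀ : ℕ) (hk₀ : k₀ ∈ Finset.Icc 1 k)
    (φ : Option (Fin (k + 1) × α) → ℕ) (hφ : IsLRanking (apexCopies U k) 2 φ)
    (hrange : ∀ (i : Fin (k + 1)) (u : α), φ (some (i, u)) ∈ Finset.Icc k₀ k) :
    k₀ + h ≤ φ none := by

  classical
  obtain ⟨hk₀1, hk₀2⟩ := Finset.mem_Icc.mp hk₀
  cases isEmpty_or_nonempty α with
  | inl hempty =>
      exfalso
      have h0 : (0:ℕ) ∈ {m | ∃ ψ : α → ℕ, IsLRanking U 2 ψ ∧ ∀ v, ψ v ∈ Finset.Icc 1 m} :=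
        ⟨fun _ => 1, fun u _ _ _ _ _ => (hempty.false u).elim,
          fun v => (hempty.false v).elim⟩
      have h00 : rankingNumber U 2 = 0 := Nat.le_zero.mp (Nat.sInf_le h0)
      rw [h00] at hU
      omega
  | inr hne =>
  -- key: two distinct vertices in the copies with the same colour force φ none above them
  have key : ∀ x y : Fin (k+1) × α, x ≠ y → φ (some x) = φ (some y) →
      φ (some x) < φ none := by
    intro x y hxy heq
    have h1 : (apexCopies U k).Adj (some x) none := Or.inr (Or.inl ⟨rfl, by simp⟩)
    have h2 : (apexCopies U k).Adj none (some y) := Or.inl ⟨rfl, by simp⟩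
    let p : (apexCopies U k).Walk (some x) (some y) :=
      Walk.cons h1 (Walk.cons h2 Walk.nil)
    have hp : p.IsPath := by
      rw [Walk.isPath_def]
      simp only [p, Walk.support_cons, Walk.support_nil]
      simp [hxy]
    rcases hφ p hp (by simp [p]) (by simp [p]) with hn | ⟨w, hw, hlt⟩
    · exact absurd heq hn
    · simp only [p, Walk.support_cons, Walk.support_nil, List.mem_cons,
        List.not_mem_nil, or_false] at hw
      rcases hw with rfl | rfl | rfl
      · omega
      · exact hlt
      · omega
  have hk0le : ∀ (i : Fin (k+1)) (u : α), k₀ ≤ φ (some (i,u)) :=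
    fun i u => (Finset.mem_Icc.mp (hrange i u)).1
  -- find a copy whose colours are all below φ none
  have hcopy : ∃ i : Fin (k+1), ∀ u : α, φ (some (i,u)) < φ none := by
    by_contra hc
    push_neg at hc
    choose f hf using hc
    have hinj : Set.InjOn (fun i : Fin (k+1) => φ (some (i, f i))) ↑(Finset.univ : Finset (Fin (k+1))) := by
      intro i _ j _ hij
      by_contra hne'
      have hx : (i, f i) ≠ (j, f j) := by
        intro hcon; exact hne' (congrArg Prod.fst hcon)
      have := key (i, f i) (j, f j) hx hij
      exact absurd this (not_lt.mpr (hf i))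
    have hcard := Finset.card_le_card_of_injOn (fun i : Fin (k+1) => φ (some (i, f i)))
        (fun i _ => hrange i (f i)) hinj
    simp only [Finset.card_univ, Fintype.card_fin, Nat.card_Icc] at hcard
    omega
  obtain ⟨i, hi⟩ := hcopy
  set ψ : α → ℕ := fun u => φ (some (i,u)) - (k₀ - 1) with hψ
  have hψrank : IsLRanking U 2 ψ := by
    intro u v p hp h1 h2
    let f : U →g apexCopies U k :=
      ⟨fun u => some (i,u), fun {a b} hab => Or.inr (Or.inr ⟨i, a, b, rfl, rfl, hab⟩)⟩
    have hfinj : Function.Injective f := by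
      intro a b hab
      have h' : (some (i,a) : Option (Fin (k+1) × α)) = some (i,b) := hab
      exact congrArg Prod.snd (Option.some_injective _ h')
    rcases hφ (p.map f) (Walk.map_isPath_of_injective hfinj hp) (by simpa using h1) (by simpa using h2) with
      hn | ⟨w, hw, hlt⟩
    · left
      have hu := hk0le i u
      have hv := hk0le i v
      have hn' : φ (some (i,u)) ≠ φ (some (i,v)) := hn
      simp only [hψ]
      omega
    · right
      rw [Walk.support_map] at hw
      obtain ⟨w', hw', rfl⟩ := List.mem_map.mp hw
      refine ⟨w', hw', ?_⟩
      have hu := hk0le i u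
      have hw'' := hk0le i w'
      have hlt' : φ (some (i,u)) < φ (some (i,w')) := hlt
      simp only [hψ]
      omega
  have hmem : (φ none - k₀) ∈
      {m | ∃ ψ' : α → ℕ, IsLRanking U 2 ψ' ∧ ∀ v, ψ' v ∈ Finset.Icc 1 m} := by
    refine ⟨ψ, hψrank, fun v => Finset.mem_Icc.mpr ⟨?_, ?_⟩⟩
    · have := hk0le i v; simp only [hψ]; omega
    · have := hi v; have := hk0le i v; simp only [hψ]; omega
  have hle : rankingNumber U 2 ≤ φ none - k₀ := Nat.sInf_le hmem
  have hlt : k₀ < φ none := by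
    obtain ⟨u⟩ := hne
    have := hk0le i u; have := hi u; omega
  have hfin : h ≤ φ none - k₀ := le_trans hU hle
  omega
end

section
/- For any graph U and any integers h, m ≥ 1, the treewidth of the (h,m)-boost satisfies tw(U^{(h,m)}) ≤ tw(U) + 1. -/
open SimpleGraph


/-- A tree decomposition (more generally, an `X`-decomposition) of `G` indexed by the
vertices of a graph `T`: each vertex's set of bags induces a connected subgraph of `T`,
and each edge of `G` is contained in some bag. -/
structure TreeDecomp {V X : Type*} (G : SimpleGraph V) (T : SimpleGraph X) where
  bag : X → Set V
  subtree : ∀ v : V, (T.induce {x | v ∈ bag x}).Connected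
  covers : ∀ ⦃u v : V⦄, G.Adj u v → ∃ x, u ∈ bag x ∧ v ∈ bag x

/-- `G` has a tree decomposition of width at most `t`. -/
def HasTreewidthAtMost {V : Type*} (G : SimpleGraph V) (t : ℕ) : Prop :=
  ∃ (X : Type) (T : SimpleGraph X), T.IsTree ∧
    ∃ D : TreeDecomp G T, ∀ x, (D.bag x).ncard ≤ t + 1

/-- The treewidth of `G`. -/
noncomputable def treewidth {V : Type*} (G : SimpleGraph V) : ℕ :=
  sInf {t | HasTreewidthAtMost G t}


/-- The `(h,m)`-boost of `U`.  Vertices are sequences recording, for each ancestor step,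
which of the `h*m+1` copies of `U` was entered and at which vertex of `U`; the empty list
is the root `a₀` (the single vertex of layer `L₀`), and lists of length `i ≤ m` are the
vertices of layer `L_i`.  A vertex is adjacent to every vertex of each of its child
copies, and two vertices in the same copy are adjacent iff they are adjacent in `U`. -/
def boost {α : Type*} (U : SimpleGraph α) (h m : ℕ) :
    SimpleGraph {l : List (Fin (h * m + 1) × α) // l.length ≤ m} where
  Adj x y :=
    (∃ p, y.1 = x.1 ++ [p]) ∨ (∃ p, x.1 = y.1 ++ [p]) ∨
      (∃ (l : List (Fin (h * m + 1) × α)) (p q : Fin (h * m + 1) × α),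
        x.1 = l ++ [p] ∧ y.1 = l ++ [q] ∧ p.1 = q.1 ∧ U.Adj p.2 q.2)
  symm := by
    constructor
    rintro x y (⟨p, hp⟩ | ⟨p, hp⟩ | ⟨l, p, q, h1, h2, h3, h4⟩)
    · exact Or.inr (Or.inl ⟨p, hp⟩)
    · exact Or.inl ⟨p, hp⟩
    · exact Or.inr (Or.inr ⟨l, q, p, h2, h1, h3.symm, h4.symm⟩)
  loopless := by
    constructor
    rintro x (⟨p, hp⟩ | ⟨p, hp⟩ | ⟨l, p, q, h1, h2, h3, h4⟩)
    · have := congrArg List.length hp; simp at this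
    · have := congrArg List.length hp; simp at this
    · rw [h1] at h2
      have : p = q := by
        have := List.append_inj_right h2 rfl
        simpa using this
      exact h4.ne (congrArg Prod.snd this)


namespace BoostAux

open Walk


variable {X : Type*} {T : SimpleGraph X}

lemma dist_ne_of_adj (hT : T.IsTree) (ρ : X) {x y : X} (hxy : T.Adj x y) :
    T.dist ρ x ≠ T.dist ρ y := by
  intro hd
  classical
  obtain ⟨P, hP, hPl⟩ := hT.isConnected.exists_path_of_dist ρ x
  by_cases hy : y ∈ P.support
  · have h1 : T.dist ρ y ≤ (P.takeUntil y hy).length := dist_le _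
    have h2 := congrArg Walk.length (P.take_spec hy)
    rw [length_append] at h2
    have h3 : (P.dropUntil y hy).length = 0 := by omega
    have h4 : y = x := eq_of_length_eq_zero h3
    exact hxy.ne h4.symm
  · have hP' : (P.concat hxy).IsPath := by
      rw [← isPath_reverse_iff, reverse_concat]
      exact hP.reverse.cons (by simpa using hy)
    obtain ⟨Q, hQ, hQl⟩ := hT.isConnected.exists_path_of_dist ρ y
    have heq := (hT.existsUnique_path ρ y).unique hP' hQ
    have := congrArg Walk.length heq
    rw [length_concat] at this
    omega

lemma parent_unique (hT : T.IsTree) (ρ : X) {x y z : X}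
    (hxy : T.Adj x y) (hxz : T.Adj x z)
    (hy : T.dist ρ y < T.dist ρ x) (hz : T.dist ρ z < T.dist ρ x) : y = z := by
  classical
  obtain ⟨Py, hPy, hly⟩ := hT.isConnected.exists_path_of_dist ρ y
  obtain ⟨Pz, hPz, hlz⟩ := hT.isConnected.exists_path_of_dist ρ z
  have hxPy : x ∉ Py.support := by
    intro hx
    have h1 := dist_le (Py.takeUntil x hx)
    have h2 := length_takeUntil_le Py hx
    omega
  have hxPz : x ∉ Pz.support := by
    intro hx
    have h1 := dist_le (Pz.takeUntil x hx)
    have h2 := length_takeUntil_le Pz hx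
    omega
  have h1 : (Py.concat hxy.symm).IsPath := by
    rw [← isPath_reverse_iff, reverse_concat]
    exact hPy.reverse.cons (by simpa using hxPy)
  have h2 : (Pz.concat hxz.symm).IsPath := by
    rw [← isPath_reverse_iff, reverse_concat]
    exact hPz.reverse.cons (by simpa using hxPz)
  have heq := (hT.existsUnique_path ρ x).unique h1 h2
  obtain ⟨hv, -⟩ := concat_inj heq
  exact hv

lemma isAcyclic_of_depth {V : Type*} {G : SimpleGraph V} {β : Type*} [LinearOrder β]
    (d : V → β)
    (h1 : ∀ u v, G.Adj u v → d u ≠ d v)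
    (h2 : ∀ u v w, G.Adj u v → G.Adj u w → d v < d u → d w < d u → v = w) :
    G.IsAcyclic := by
  intro v c hc
  classical
  have hvs : v ∈ c.support := start_mem_support c
  obtain ⟨u, hu, hmax⟩ := c.support.toFinset.exists_max_image d
    ⟨v, List.mem_toFinset.2 hvs⟩
  have hu' : u ∈ c.support := List.mem_toFinset.1 hu
  have hmax' : ∀ y ∈ c.support, d y ≤ d u := fun y hy => hmax y (List.mem_toFinset.2 hy)
  have hcyc : (c.rotate u hu').IsCycle := hc.rotate hu'
  have hsub : ∀ y ∈ (c.rotate u hu').support, d y ≤ d u := by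
    intro y hy
    rw [support_eq_cons] at hy
    rcases List.mem_cons.1 hy with rfl | hy
    · exact le_refl _
    · have := (support_rotate c u hu').mem_iff.1 hy
      exact hmax' y (by rw [support_eq_cons c]; exact List.mem_cons_of_mem _ this)
  -- destructure
  obtain ⟨w1, hadj1, q, hq⟩ := not_nil_iff.mp hcyc.not_nil
  rw [hq] at hcyc hsub
  have hqpath : q.IsPath := by
    have := hcyc.2
    rw [support_cons] at this
    exact IsPath.mk' this
  have hqlen : 2 ≤ q.length := by
    have := hcyc.three_le_length
    rw [length_cons] at this
    omega
  have hqrev : ¬ q.reverse.Nil := by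
    rw [nil_iff_length_eq, length_reverse]
    omega
  obtain ⟨z, hadj2, q2, hq2⟩ := not_nil_iff.mp hqrev
  have hqeq : q = q2.reverse.concat hadj2.symm := by
    have := congrArg Walk.reverse hq2
    rw [reverse_reverse, reverse_cons] at this
    exact this
  -- w1 ≠ z
  have hne : w1 ≠ z := by
    rintro rfl
    have htr := hcyc.1.1  -- IsTrail of cons
    rw [isTrail_cons] at htr
    apply htr.2
    rw [hqeq, edges_concat]
    rw [List.concat_eq_append]
    apply List.mem_append_right
    simp [Sym2.eq_swap]
  -- depths
  have hw1 : d w1 < d u := by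
    have hmem : w1 ∈ (cons hadj1 q).support := by
      rw [support_cons]; exact List.mem_cons_of_mem _ q.start_mem_support
    exact lt_of_le_of_ne (hsub _ hmem) (fun hh => h1 u w1 hadj1 hh.symm)
  have hz : d z < d u := by
    have hmem : z ∈ (cons hadj1 q).support := by
      rw [support_cons]
      apply List.mem_cons_of_mem
      have hz2 : z ∈ q.reverse.support := by
        rw [hq2, support_cons]
        exact List.mem_cons_of_mem _ q2.start_mem_support
      rwa [support_reverse, List.mem_reverse] at hz2
    exact lt_of_le_of_ne (hsub _ hmem) (fun hh => h1 u z hadj2 hh.symm)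
  exact hne (h2 u w1 z hadj1 hadj2 hw1 hz)




section Construction

variable {α X : Type} (T : SimpleGraph X) (h m : ℕ)

abbrev YI (α X : Type) (h m : ℕ) : Type :=
  Option ({a : List (Fin (h * m + 1) × α) // a.length < m} × Fin (h * m + 1) × X)

variable (χ : α → X) (r : X)

def yrel : YI α X h m → YI α X h m → Prop
  | none, some (a, _, x) => a.1 = [] ∧ x = r
  | some (a, j, x), some (a', j', x') =>
      (a = a' ∧ j = j' ∧ T.Adj x x') ∨
        (∃ v, a'.1 = a.1 ++ [(j, v)] ∧ x = χ v ∧ x' = χ v)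
  | _, _ => False

def Ygraph : SimpleGraph (YI α X h m) where
  Adj y y' := y ≠ y' ∧ (yrel T h m χ r y y' ∨ yrel T h m χ r y' y)
  symm := by
    constructor
    rintro y y' ⟨hne, hr⟩
    exact ⟨hne.symm, hr.symm⟩
  loopless := ⟨fun y hy => hy.1 rfl⟩

/-- anchor of a copy -/
def anc (a : List (Fin (h * m + 1) × α)) : X :=
  match a.getLast? with
  | none => r
  | some p => χ p.2

lemma anc_nil : anc h m χ r ([] : List (Fin (h * m + 1) × α)) = r := rfl

lemma anc_concat (l : List (Fin (h * m + 1) × α)) (p : Fin (h * m + 1) × α) :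
    anc h m χ r (l ++ [p]) = χ p.2 := by
  unfold anc
  rw [List.getLast?_concat]

noncomputable def ydep : YI α X h m → ℕ ×ₗ ℕ
  | none => toLex (0, 0)
  | some (a, _, x) => toLex (a.1.length + 1, T.dist (anc h m χ r a.1) x)

lemma ydep_h1 (hT : T.IsTree) :
    ∀ y y', (Ygraph T h m χ r).Adj y y' → ydep T h m χ r y ≠ ydep T h m χ r y' := by
  have key : ∀ y y', yrel T h m χ r y y' → ydep T h m χ r y ≠ ydep T h m χ r y' := by
    rintro (_ | ⟨a, j, x⟩) (_ | ⟨a', j', x'⟩) hrel <;>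
      simp only [yrel] at hrel
    · intro hd
      simp only [ydep, toLex_inj, Prod.mk.injEq] at hd
      omega
    · rcases hrel with ⟨rfl, rfl, hadj⟩ | ⟨v, hv, _, _⟩
      · intro hd
        simp only [ydep, toLex_inj, Prod.mk.injEq] at hd
        exact dist_ne_of_adj hT _ hadj hd.2
      · intro hd
        simp only [ydep, toLex_inj, Prod.mk.injEq] at hd
        have := congrArg List.length hv
        simp at this
        omega
  rintro y y' ⟨hne, hrel | hrel⟩
  · exact key y y' hrel
  · exact (key y' y hrel).symm

lemma ydep_h2 (hT : T.IsTree) :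
    ∀ y v w, (Ygraph T h m χ r).Adj y v → (Ygraph T h m χ r).Adj y w →
      ydep T h m χ r v < ydep T h m χ r y → ydep T h m χ r w < ydep T h m χ r y →
      v = w := by
  intro y
  match y with
  | none =>
    intro v w _ _ hv _
    exfalso
    match v with
    | none => exact (lt_irrefl _ hv)
    | some (a, j, x) =>
      rw [ydep, ydep, Prod.Lex.lt_iff] at hv
      simp at hv
  | some (a, j, x) =>
    have key : ∀ z, (Ygraph T h m χ r).Adj (some (a, j, x)) z →
        ydep T h m χ r z < ydep T h m χ r (some (a, j, x)) →
        (∃ x', z = some (a, j, x') ∧ T.Adj x x' ∧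
          T.dist (anc h m χ r a.1) x' < T.dist (anc h m χ r a.1) x) ∨
        (a.1 = [] ∧ x = r ∧ z = none) ∨
        (∃ (b : {l : List (Fin (h * m + 1) × α) // l.length < m}) (k : Fin (h * m + 1))
          (v₀ : α), a.1 = b.1 ++ [(k, v₀)] ∧ x = χ v₀ ∧ z = some (b, k, χ v₀)) := by
      rintro z ⟨hne, hrel | hrel⟩ hlt
      · match z with
        | none => simp only [yrel] at hrel
        | some (a', j', x') =>
          simp only [yrel] at hrel
          rcases hrel with ⟨rfl, rfl, hadj⟩ | ⟨v₀, hv₀, hx, hx'⟩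
          · left
            refine ⟨x', rfl, hadj, ?_⟩
            rw [ydep, ydep, Prod.Lex.lt_iff] at hlt
            rcases hlt with hlt | ⟨_, hlt⟩
            · simp at hlt
            · exact hlt
          · exfalso
            rw [ydep, ydep, Prod.Lex.lt_iff] at hlt
            have := congrArg List.length hv₀
            simp at this
            rcases hlt with hlt | ⟨hlt, _⟩ <;> simp_all <;> omega
      · match z with
        | none =>
          simp only [yrel] at hrel
          exact Or.inr (Or.inl ⟨hrel.1, hrel.2, rfl⟩)
        | some (a', j', x') =>
          simp only [yrel] at hrel
          rcases hrel with ⟨rfl, rfl, hadj⟩ | ⟨v₀, hv₀, hx', hx⟩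
          · left
            refine ⟨x', rfl, hadj.symm, ?_⟩
            rw [ydep, ydep, Prod.Lex.lt_iff] at hlt
            rcases hlt with hlt | ⟨_, hlt⟩
            · simp at hlt
            · exact hlt
          · exact Or.inr (Or.inr ⟨a', j', v₀, hv₀, hx, by rw [hx']⟩)
    intro v w hav haw hv hw
    rcases key v hav hv with ⟨x₁, rfl, had1, hd1⟩ | ⟨hnil, hxr, rfl⟩ | ⟨b₁, k₁, v₁, hb1, hx1, rfl⟩ <;>
      rcases key w haw hw with ⟨x₂, rfl, had2, hd2⟩ | ⟨hnil', hxr', rfl⟩ | ⟨b₂, k₂, v₂, hb2, hx2, rfl⟩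
    · rw [parent_unique hT _ had1 had2 hd1 hd2]
    · exfalso
      rw [hnil', anc_nil, hxr'] at hd1
      simp [SimpleGraph.dist_self] at hd1
    · exfalso
      rw [hb2, anc_concat, ← hx2] at hd1
      simp [SimpleGraph.dist_self] at hd1
    · exfalso
      rw [hnil, anc_nil, hxr] at hd2
      simp [SimpleGraph.dist_self] at hd2
    · rfl
    · exfalso
      rw [hnil] at hb2
      simp at hb2
    · exfalso
      rw [hb1, anc_concat, ← hx1] at hd2
      simp [SimpleGraph.dist_self] at hd2
    · exfalso
      rw [hnil'] at hb1
      simp at hb1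
    · have hbb : b₁.1 = b₂.1 ∧ (k₁, v₁) = (k₂, v₂) := by
        have := hb1.symm.trans hb2
        have h2 := List.append_inj' this (by simp)
        exact ⟨h2.1, by simpa using h2.2⟩
      have hb : b₁ = b₂ := Subtype.ext hbb.1
      have hkv := hbb.2
      rw [Prod.mk.injEq] at hkv
      rw [hb, hkv.1, hkv.2]
lemma within_adj {a : {l : List (Fin (h * m + 1) × α) // l.length < m}}
    {j : Fin (h * m + 1)} {x x' : X} (hadj : T.Adj x x') :
    (Ygraph T h m χ r).Adj (some (a, j, x)) (some (a, j, x')) := by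
  refine ⟨?_, Or.inl (Or.inl ⟨rfl, rfl, hadj⟩)⟩
  simp only [ne_eq, Option.some.injEq, Prod.mk.injEq, not_and]
  intro _ _
  exact hadj.ne

lemma link_adj {a b : {l : List (Fin (h * m + 1) × α) // l.length < m}}
    {k : Fin (h * m + 1)} {v : α} (hab : a.1 = b.1 ++ [(k, v)]) (j' : Fin (h * m + 1)) :
    (Ygraph T h m χ r).Adj (some (b, k, χ v)) (some (a, j', χ v)) := by
  refine ⟨?_, Or.inl (Or.inr ⟨v, hab, rfl, rfl⟩)⟩
  simp only [ne_eq, Option.some.injEq, Prod.mk.injEq, not_and]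
  intro hb _
  have := congrArg (fun s : {l : List (Fin (h * m + 1) × α) // l.length < m} => s.1.length) hb
  simp [hab] at this

lemma root_adj {a : {l : List (Fin (h * m + 1) × α) // l.length < m}}
    {j : Fin (h * m + 1)} (ha : a.1 = []) :
    (Ygraph T h m χ r).Adj (some (a, j, r)) none := by
  exact ⟨by simp, Or.inr ⟨ha, rfl⟩⟩



end Construction

section Construction2
variable {α X : Type} (T : SimpleGraph X) (h m : ℕ) (χ : α → X) (r : X)

def homCopy (a : {l : List (Fin (h * m + 1) × α) // l.length < m}) (j : Fin (h * m + 1)) :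
    T →g Ygraph T h m χ r :=
  ⟨fun x => some (a, j, x), fun hadj => within_adj T h m χ r hadj⟩

lemma ygraph_connected (hT : T.IsTree) : (Ygraph T h m χ r).Connected := by
  rw [connected_iff]
  refine ⟨?_, ⟨none⟩⟩
  have base : ∀ a j x, a.1 = [] → (Ygraph T h m χ r).Reachable (some (a, j, x)) none := by
    intro a j x ha
    exact (Reachable.map (homCopy T h m χ r a j)
      (hT.isConnected.preconnected x r)).trans (root_adj T h m χ r ha).reachable
  have main : ∀ n a j x, a.1.length ≤ n →
      (Ygraph T h m χ r).Reachable (some (a, j, x)) none := by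
    intro n
    induction n with
    | zero =>
      intro a j x hl
      exact base a j x (List.length_eq_zero_iff.mp (Nat.le_zero.mp hl))
    | succ n ih =>
      intro a j x hl
      rcases List.eq_nil_or_concat a.1 with ha | ⟨b, p, hab⟩
      · exact base a j x ha
      · rw [List.concat_eq_append] at hab
        obtain ⟨k, v⟩ := p
        have hlen : b.length + 1 = a.1.length := by rw [hab]; simp
        have hb : b.length < m := by have := a.2; omega
        have h1 : (Ygraph T h m χ r).Reachable (some (a, j, x)) (some (a, j, χ v)) :=
          Reachable.map (homCopy T h m χ r a j) (hT.isConnected.preconnected x (χ v))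
        have h2 := (link_adj T h m χ r (b := ⟨b, hb⟩) hab j).reachable
        have h3 := ih ⟨b, hb⟩ k (χ v) (by simp only []; omega)
        exact h1.trans (h2.symm.trans h3)
  have reach_none : ∀ y : YI α X h m, (Ygraph T h m χ r).Reachable y none := by
    intro y
    match y with
    | none => exact Reachable.refl _
    | some (a, j, x) => exact main a.1.length a j x le_rfl
  intro y y'
  exact (reach_none y).trans (reach_none y').symm

end Construction2

section Decomp
variable {α X : Type} (U : SimpleGraph α) (T : SimpleGraph X) (h m : ℕ) (χ : α → X) (r : X)

lemma reach_induce_univ {S : Set (YI α X h m)}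
    (a : {l : List (Fin (h * m + 1) × α) // l.length < m}) (j : Fin (h * m + 1))
    (hsub : ∀ x, some (a, j, x) ∈ S) (hT : T.Connected) (x x' : X) :
    ((Ygraph T h m χ r).induce S).Reachable ⟨some (a, j, x), hsub x⟩
      ⟨some (a, j, x'), hsub x'⟩ :=
  Reachable.map
    (⟨fun z => ⟨some (a, j, z), hsub z⟩,
      fun hadj => within_adj T h m χ r hadj⟩ : T →g (Ygraph T h m χ r).induce S)
    (hT.preconnected x x')

lemma reach_induce_A {S : Set (YI α X h m)} {A : Set X}
    (a : {l : List (Fin (h * m + 1) × α) // l.length < m}) (j : Fin (h * m + 1))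
    (hsub : ∀ x ∈ A, some (a, j, x) ∈ S) (hconn : (T.induce A).Connected)
    {x x' : X} (hx : x ∈ A) (hx' : x' ∈ A) :
    ((Ygraph T h m χ r).induce S).Reachable ⟨some (a, j, x), hsub x hx⟩
      ⟨some (a, j, x'), hsub x' hx'⟩ :=
  Reachable.map
    (⟨fun z => ⟨some (a, j, z.1), hsub z.1 z.2⟩,
      fun hadj => within_adj T h m χ r hadj⟩ : T.induce A →g (Ygraph T h m χ r).induce S)
    (hconn.preconnected ⟨x, hx⟩ ⟨x', hx'⟩)

def ybag (D : TreeDecomp U T) :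
    YI α X h m → Set {l : List (Fin (h * m + 1) × α) // l.length ≤ m}
  | none => {w | w.1 = []}
  | some (a, j, x) => {w | w.1 = a.1 ∨ ∃ v ∈ D.bag x, w.1 = a.1 ++ [(j, v)]}

lemma mem_ybag_none {D : TreeDecomp U T} {w} :
    w ∈ ybag U T h m D none ↔ w.1 = [] := Iff.rfl

lemma mem_ybag_some {D : TreeDecomp U T} {w} {a} {j} {x} :
    w ∈ ybag U T h m D (some (a, j, x)) ↔
      w.1 = a.1 ∨ ∃ v ∈ D.bag x, w.1 = a.1 ++ [(j, v)] := Iff.rfl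

lemma ybag_covers (D : TreeDecomp U T) (hχ : ∀ v, v ∈ D.bag (χ v)) :
    ∀ ⦃u v : {l : List (Fin (h * m + 1) × α) // l.length ≤ m}⦄,
      (boost U h m).Adj u v →
      ∃ y, u ∈ ybag U T h m D y ∧ v ∈ ybag U T h m D y := by
  rintro u v (⟨p, hp⟩ | ⟨p, hp⟩ | ⟨l, p, q, h1, h2, h3, h4⟩)
  · obtain ⟨j, vv⟩ := p
    have hu : u.1.length < m := by
      have := v.2; rw [hp] at this; simp at this; omega
    exact ⟨some (⟨u.1, hu⟩, j, χ vv), Or.inl rfl, Or.inr ⟨vv, hχ vv, hp⟩⟩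
  · obtain ⟨j, vv⟩ := p
    have hv : v.1.length < m := by
      have := u.2; rw [hp] at this; simp at this; omega
    exact ⟨some (⟨v.1, hv⟩, j, χ vv), Or.inr ⟨vv, hχ vv, hp⟩, Or.inl rfl⟩
  · obtain ⟨x, hx1, hx2⟩ := D.covers h4
    have hl : l.length < m := by
      have := u.2; rw [h1] at this; simp at this; omega
    refine ⟨some (⟨l, hl⟩, p.1, x), Or.inr ⟨p.2, hx1, ?_⟩, Or.inr ⟨q.2, hx2, ?_⟩⟩
    · rw [h1]
    · rw [h2, h3]

lemma ybag_ncard [Finite α] (D : TreeDecomp U T) (t : ℕ)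
    (hD : ∀ x, (D.bag x).ncard ≤ t + 1) :
    ∀ y, (ybag U T h m D y).ncard ≤ (t + 1) + 1 := by
  intro y
  match y with
  | none =>
    have heq : ybag U T h m D (none : YI α X h m) =
        {(⟨[], by simp⟩ : {l : List (Fin (h * m + 1) × α) // l.length ≤ m})} := by
      ext w
      rw [mem_ybag_none]
      constructor
      · intro hw; exact Subtype.ext hw
      · rintro rfl; rfl
    rw [heq, Set.ncard_singleton]
    omega
  | some (a, j, x) =>
    have hsub : ybag U T h m D (some (a, j, x)) ⊆
        insert (⟨a.1, le_of_lt a.2⟩ : {l : List (Fin (h * m + 1) × α) // l.length ≤ m})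
          ((fun v : α =>
              (⟨a.1 ++ [(j, v)], by simp; omega⟩ :
                {l : List (Fin (h * m + 1) × α) // l.length ≤ m})) '' D.bag x) := by
      rintro w (hw | ⟨v, hv, hw⟩)
      · exact Set.mem_insert_iff.2 (Or.inl (Subtype.ext hw))
      · exact Set.mem_insert_iff.2 (Or.inr ⟨v, hv, Subtype.ext hw.symm⟩)
    have h1 := Set.ncard_le_ncard hsub (Set.toFinite _)
    have h2 := Set.ncard_insert_le
      (⟨a.1, le_of_lt a.2⟩ : {l : List (Fin (h * m + 1) × α) // l.length ≤ m})
      ((fun v : α =>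
          (⟨a.1 ++ [(j, v)], by simp; omega⟩ :
            {l : List (Fin (h * m + 1) × α) // l.length ≤ m})) '' D.bag x)
    have h3 := Set.ncard_image_le (f := fun v : α =>
          (⟨a.1 ++ [(j, v)], by simp; omega⟩ :
            {l : List (Fin (h * m + 1) × α) // l.length ≤ m})) (Set.toFinite (D.bag x))
    have h4 := hD x
    omega

lemma ybag_subtree (hT : T.IsTree) (D : TreeDecomp U T) (hχ : ∀ v, v ∈ D.bag (χ v)) :
    ∀ w, ((Ygraph T h m χ r).induce {y | w ∈ ybag U T h m D y}).Connected := by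
  intro w
  rcases List.eq_nil_or_concat w.1 with hw | ⟨c, p, hw⟩
  · -- w is the root vertex
    have hnone : (none : YI α X h m) ∈ {y | w ∈ ybag U T h m D y} := hw
    have hsome : ∀ a j x, ((some (a, j, x) : YI α X h m) ∈
        {y | w ∈ ybag U T h m D y}) ↔ a.1 = [] := by
      intro a j x
      simp only [Set.mem_setOf_eq, mem_ybag_some]
      constructor
      · rintro (hw' | ⟨v, _, hw'⟩)
        · rw [← hw', hw]
        · exfalso; rw [hw] at hw'; simp at hw'
      · intro ha; exact Or.inl (hw.trans ha.symm)
    rw [connected_iff]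
    refine ⟨?_, ⟨⟨none, hnone⟩⟩⟩
    have reach : ∀ z : {y : YI α X h m // y ∈ {y | w ∈ ybag U T h m D y}},
        ((Ygraph T h m χ r).induce {y | w ∈ ybag U T h m D y}).Reachable z
          ⟨none, hnone⟩ := by
      rintro ⟨(_ | ⟨a, j, x⟩), hz⟩
      · exact Reachable.refl _
      · have ha : a.1 = [] := (hsome a j x).1 hz
        have hsub : ∀ x', (some (a, j, x') : YI α X h m) ∈
            {y | w ∈ ybag U T h m D y} := fun x' => (hsome a j x').2 ha
        refine (reach_induce_univ T h m χ r a j hsub hT.isConnected x r).trans ?_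
        have hadj : ((Ygraph T h m χ r).induce {y | w ∈ ybag U T h m D y}).Adj
            ⟨some (a, j, r), hsub r⟩ ⟨none, hnone⟩ := root_adj T h m χ r ha
        exact hadj.reachable
    intro z z'
    exact (reach z).trans (reach z').symm
  · -- w is a copy vertex
    rw [List.concat_eq_append] at hw
    obtain ⟨k, v⟩ := p
    have hc : c.length < m := by
      have := w.2; rw [hw] at this; simp at this; omega
    have msome : ∀ a j x, ((some (a, j, x) : YI α X h m) ∈
        {y | w ∈ ybag U T h m D y}) ↔
        (a.1 = w.1 ∨ (a.1 = c ∧ j = k ∧ v ∈ D.bag x)) := by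
      intro a j x
      simp only [Set.mem_setOf_eq, mem_ybag_some]
      constructor
      · rintro (hw' | ⟨v', hv', hw'⟩)
        · exact Or.inl hw'.symm
        · rw [hw] at hw'
          have hinj := List.append_inj' hw' (by simp)
          have hpq : (k, v) = (j, v') := by simpa using hinj.2
          rw [Prod.mk.injEq] at hpq
          exact Or.inr ⟨hinj.1.symm, hpq.1.symm, hpq.2 ▸ hv'⟩
      · rintro (ha | ⟨ha, hj, hx⟩)
        · exact Or.inl ha.symm
        · exact Or.inr ⟨v, hx, by rw [hw, ha, hj]⟩
    have mnone : (none : YI α X h m) ∉ {y | w ∈ ybag U T h m D y} := by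
      intro hcon
      have : w.1 = [] := hcon
      rw [hw] at this; simp at this
    have hy₀ : (some (⟨c, hc⟩, k, χ v) : YI α X h m) ∈ {y | w ∈ ybag U T h m D y} :=
      (msome ⟨c, hc⟩ k (χ v)).2 (Or.inr ⟨rfl, rfl, hχ v⟩)
    rw [connected_iff]
    refine ⟨?_, ⟨⟨_, hy₀⟩⟩⟩
    have reach : ∀ z : {y : YI α X h m // y ∈ {y | w ∈ ybag U T h m D y}},
        ((Ygraph T h m χ r).induce {y | w ∈ ybag U T h m D y}).Reachable z
          ⟨some (⟨c, hc⟩, k, χ v), hy₀⟩ := by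
      rintro ⟨(_ | ⟨a, j, x⟩), hz⟩
      · exact absurd hz mnone
      · rcases (msome a j x).1 hz with ha | ⟨ha, hj, hx⟩
        · have hsub : ∀ x', (some (a, j, x') : YI α X h m) ∈
              {y | w ∈ ybag U T h m D y} := fun x' => (msome a j x').2 (Or.inl ha)
          refine (reach_induce_univ T h m χ r a j hsub hT.isConnected x (χ v)).trans ?_
          have hadj : ((Ygraph T h m χ r).induce {y | w ∈ ybag U T h m D y}).Adj
              ⟨some (⟨c, hc⟩, k, χ v), hy₀⟩ ⟨some (a, j, χ v), hsub (χ v)⟩ :=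
            link_adj T h m χ r (b := ⟨c, hc⟩) (ha.trans hw) j
          exact hadj.symm.reachable
        · subst hj
          have ha' : a = ⟨c, hc⟩ := Subtype.ext ha
          subst ha'
          have hsub : ∀ x' ∈ {x' | v ∈ D.bag x'},
              (some ((⟨c, hc⟩ : {l : List (Fin (h * m + 1) × α) // l.length < m}), j, x') :
                YI α X h m) ∈ {y | w ∈ ybag U T h m D y} :=
            fun x' hx' => (msome ⟨c, hc⟩ j x').2 (Or.inr ⟨rfl, rfl, hx'⟩)
          exact reach_induce_A T h m χ r ⟨c, hc⟩ j hsub (D.subtree v) hx (hχ v)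
    intro z z'
    exact (reach z).trans (reach z').symm

lemma boost_hastw [Finite α] (t : ℕ) (hT : T.IsTree) (D : TreeDecomp U T)
    (hD : ∀ x, (D.bag x).ncard ≤ t + 1) :
    HasTreewidthAtMost (boost U h m) (t + 1) := by
  have hχex : ∀ v : α, ∃ x, v ∈ D.bag x := by
    intro v
    obtain ⟨⟨x, hx⟩⟩ := (D.subtree v).nonempty
    exact ⟨x, hx⟩
  choose χ hχ using hχex
  obtain ⟨r⟩ := hT.isConnected.nonempty
  exact ⟨YI α X h m, Ygraph T h m χ r,
    ⟨ygraph_connected T h m χ r hT,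
      isAcyclic_of_depth (ydep T h m χ r) (ydep_h1 T h m χ r hT) (ydep_h2 T h m χ r hT)⟩,
    ⟨ybag U T h m D, ybag_subtree U T h m χ r hT D hχ, ybag_covers U T h m χ D hχ⟩,
    ybag_ncard U T h m D t hD⟩

end Decomp

end BoostAux

/-- `tw(U^{(h,m)}) ≤ tw(U) + 1`. -/
theorem boost_treewidth {α : Type} [Fintype α] (U : SimpleGraph α) (h m : ℕ)
    (hh : 1 ≤ h) (hm : 1 ≤ m) :
    treewidth (boost U h m) ≤ treewidth U + 1 := by
  classical
  have hne : HasTreewidthAtMost U (Fintype.card α) := by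
    refine ⟨Unit, ⊥, ⟨?_, ?_⟩,
      ⟨fun _ => Set.univ, ?_, fun u v _ => ⟨(), trivial, trivial⟩⟩, ?_⟩
    · rw [connected_iff]
      exact ⟨fun a b => by cases a; cases b; exact Reachable.refl _, ⟨()⟩⟩
    · intro v c hc
      exact hc.ne_bot rfl
    · intro v
      rw [connected_iff]
      refine ⟨fun a b => ?_, ⟨⟨(), trivial⟩⟩⟩
      have hab : a = b := Subsingleton.elim a b
      exact hab ▸ Reachable.refl a
    · intro x
      rw [Set.ncard_univ, Nat.card_eq_fintype_card]
      omega
  have hmem : HasTreewidthAtMost U (treewidth U) :=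
    Nat.sInf_mem (⟨_, hne⟩ : {t | HasTreewidthAtMost U t}.Nonempty)
  obtain ⟨X, T, hT, D, hD⟩ := hmem
  exact Nat.sInf_le (BoostAux.boost_hastw U T h m (treewidth U) hT D hD)
end

section
/- Let H be a graph, let (B_x : x ∈ V(T)) be a tree decomposition of H, and let ξ: V(H) → ℝ be positive on V(H). Then for any integer c > 1, there exists S_T ⊆ V(T) with |S_T| ≤ c such that every connected component X of H − (∪_{x∈S_T} B_x) satisfies Σ_{v∈V(X)} ξ(v) ≤ (1/c)·Σ_{v∈V(H)} ξ(v). -/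
open SimpleGraph

set_option linter.unusedSectionVars false
set_option maxHeartbeats 1000000


namespace TWaux
variable {X : Type*} [DecidableEq X] {T : SimpleGraph X}

def AReach (T : SimpleGraph X) (S : Finset X) (a b : X) : Prop :=
  ∃ p : T.Walk a b, ∀ s ∈ S, s ∉ p.support

lemma areach_trans {S : Finset X} {a b c : X} (h1 : AReach T S a b) (h2 : AReach T S b c) :
    AReach T S a c := by
  obtain ⟨p, hp⟩ := h1; obtain ⟨q, hq⟩ := h2
  refine ⟨p.append q, fun s hs => ?_⟩
  rw [SimpleGraph.Walk.mem_support_append_iff]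
  push_neg
  exact ⟨hp s hs, hq s hs⟩

lemma areach_symm {S : Finset X} {a b : X} (h1 : AReach T S a b) : AReach T S b a := by
  obtain ⟨p, hp⟩ := h1
  exact ⟨p.reverse, fun s hs => by rw [Walk.support_reverse, List.mem_reverse]; exact hp s hs⟩

lemma areach_mono {S S' : Finset X} (hss : S' ⊆ S) {a b : X} (h1 : AReach T S a b) :
    AReach T S' a b := by
  obtain ⟨p, hp⟩ := h1
  exact ⟨p, fun s hs => hp s (hss hs)⟩

variable (hT : T.IsTree) (r : X)

noncomputable def pt (z : X) : T.Walk r z := (hT.existsUnique_path r z).choose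

lemma pt_isPath (z : X) : (pt hT r z).IsPath := (hT.existsUnique_path r z).choose_spec.1

lemma pt_unique {z : X} (q : T.Walk r z) (hq : q.IsPath) : q = pt hT r z :=
  (hT.existsUnique_path r z).choose_spec.2 q hq

lemma mem_of_mem_pt {x z : X} (hx : x ∈ (pt hT r z).support) (q : T.Walk r z) :
    x ∈ q.support := by
  have : q.bypass = pt hT r z := pt_unique hT r _ q.bypass_isPath
  exact q.support_bypass_subset (this ▸ hx)

noncomputable def depth (z : X) : ℕ := (pt hT r z).length

lemma depth_lt_of_mem_pt {x z : X} (hx : x ∈ (pt hT r z).support) (hne : x ≠ z) :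
    depth hT r x < depth hT r z := by
  have hsplit := (pt hT r z).take_spec hx
  have htake : ((pt hT r z).takeUntil x hx) = pt hT r x :=
    pt_unique hT r _ ((pt_isPath hT r z).takeUntil hx)
  have hlen : ((pt hT r z).takeUntil x hx).length + ((pt hT r z).dropUntil x hx).length
      = (pt hT r z).length := by
    rw [← Walk.length_append, hsplit]
  have hpos : 0 < ((pt hT r z).dropUntil x hx).length := by
    rcases Nat.eq_zero_or_pos ((pt hT r z).dropUntil x hx).length with h0 | h
    · exact absurd (Walk.eq_of_length_eq_zero h0) hne
    · exact h
  rw [htake] at hlen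
  unfold depth
  omega

lemma mem_pt_of_areach {x y z : X} (hy : x ∈ (pt hT r y).support)
    (h : AReach T {x} y z) : x ∈ (pt hT r z).support := by
  by_contra hxz
  obtain ⟨m, hm⟩ := h
  have hmx : x ∉ m.support := hm x (Finset.mem_singleton_self x)
  have hx' := mem_of_mem_pt hT r hy ((pt hT r z).append m.reverse)
  rw [Walk.mem_support_append_iff] at hx'
  rcases hx' with h1 | h1
  · exact hxz h1
  · rw [Walk.support_reverse, List.mem_reverse] at h1; exact hmx h1

lemma depth_le_of_mem_pt {x z : X} (hx : x ∈ (pt hT r z).support) :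
    depth hT r x ≤ depth hT r z := by
  by_cases h : x = z
  · subst h; exact le_refl _
  · exact (depth_lt_of_mem_pt hT r hx h).le

lemma key {x y : X} (hxy : x ≠ y) (hy : x ∈ (pt hT r y).support) :
    ∃ y₁, depth hT r x < depth hT r y₁ ∧
      ∀ z, AReach T {x} y z → y₁ ∈ (pt hT r z).support := by
  have hQpath : ((pt hT r y).dropUntil x hy).IsPath := (pt_isPath hT r y).dropUntil hy
  obtain ⟨y₁, hadj, q, hQeq⟩ := Walk.not_nil_iff.mp (Walk.not_nil_of_ne (p := (pt hT r y).dropUntil x hy) hxy)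
  rw [hQeq, Walk.cons_isPath_iff] at hQpath
  obtain ⟨hqpath, hxq⟩ := hQpath
  -- q : T.Walk y₁ y avoiding x
  have hqy : q.support ⊆ (pt hT r y).support := by
    intro a ha
    exact (pt hT r y).support_dropUntil_subset hy
      (hQeq ▸ (Walk.support_cons _ _ ▸ List.mem_cons_of_mem _ ha))
  -- x is on every walk to y₁
  have hxy₁ : x ∈ (pt hT r y₁).support := by
    by_contra hxp
    have hx' := mem_of_mem_pt hT r hy ((pt hT r y₁).append q)
    rw [Walk.mem_support_append_iff] at hx'
    rcases hx' with h1 | h1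
    · exact hxp h1
    · exact hxq h1
  refine ⟨y₁, depth_lt_of_mem_pt hT r hxy₁ hadj.ne, ?_⟩
  rintro z ⟨m, hm⟩
  have hmx : x ∉ m.support := hm x (Finset.mem_singleton_self x)
  have hz : x ∈ (pt hT r z).support := mem_pt_of_areach hT r hy ⟨m, hm⟩
  have hznex : x ≠ z := fun h => hmx (h.symm ▸ m.end_mem_support)
  by_contra hy1
  have hQzpath : ((pt hT r z).dropUntil x hz).IsPath := (pt_isPath hT r z).dropUntil hz
  obtain ⟨a, hadj', q', hQzeq⟩ := Walk.not_nil_iff.mp (Walk.not_nil_of_ne (p := (pt hT r z).dropUntil x hz) hznex)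
  rw [hQzeq, Walk.cons_isPath_iff] at hQzpath
  obtain ⟨hq'path, hxq'⟩ := hQzpath
  have hay1 : a ≠ y₁ := by
    intro h
    apply hy1
    apply (pt hT r z).support_dropUntil_subset hz
    rw [hQzeq]
    exact Walk.support_cons _ _ ▸ List.mem_cons_of_mem _ (h ▸ q'.start_mem_support)
  -- walk from a to y₁ avoiding x
  set n : T.Walk a y₁ := q'.append (m.reverse.append q.reverse) with hndef
  have hnx : x ∉ n.support := by
    rw [hndef, Walk.mem_support_append_iff, Walk.mem_support_append_iff,
      Walk.support_reverse, Walk.support_reverse, List.mem_reverse, List.mem_reverse]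
    push_neg
    exact ⟨hxq', hmx, hxq⟩
  have hmbx : x ∉ n.bypass.support := fun h => hnx (n.support_bypass_subset h)
  have hP1 : (Walk.cons hadj' n.bypass).IsPath := by
    rw [Walk.cons_isPath_iff]; exact ⟨n.bypass_isPath, hmbx⟩
  have hP2 : (Walk.cons hadj Walk.nil).IsPath := by
    rw [Walk.cons_isPath_iff]
    simp [hadj.ne]
  have := hT.IsAcyclic.path_unique ⟨Walk.cons hadj' n.bypass, hP1⟩ ⟨Walk.cons hadj Walk.nil, hP2⟩
  have hlen := congrArg (fun p : T.Path x y₁ => p.1.length) this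
  simp only [Walk.length_cons, Walk.length_nil] at hlen
  exact hay1 (Walk.eq_of_length_eq_zero (p := n.bypass) (by omega))

open scoped Classical in
lemma treeCut (hT : T.IsTree) (r : X) (t : ℝ) (ht : 0 < t) :
    ∀ (n : ℕ) (P : Finset X) (w : X → ℝ), P.card ≤ n → (∀ x, 0 ≤ w x) → (∀ x ∉ P, w x = 0) →
    ∃ S : Finset X, (S = ∅ ∨ (S.card : ℝ) * t < ∑ x ∈ P, w x) ∧
      ∀ y ∉ S, ∑ x ∈ P.filter (fun x => AReach T S y x), w x ≤ t := by
  intro n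
  induction n with
  | zero =>
    intro P w hcard hw hw0
    have hP : P = ∅ := Finset.card_eq_zero.mp (Nat.le_zero.mp hcard)
    refine ⟨∅, Or.inl rfl, fun y _ => ?_⟩
    rw [hP]
    simp only [Finset.filter_empty, Finset.sum_empty]
    exact ht.le
  | succ n ih =>
    intro P w hcard hw hw0
    by_cases hWle : ∑ x ∈ P, w x ≤ t
    · refine ⟨∅, Or.inl rfl, fun y _ => ?_⟩
      refine le_trans ?_ hWle
      exact Finset.sum_le_sum_of_subset_of_nonneg (Finset.filter_subset _ _)
        (fun i _ _ => hw i)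
    · push_neg at hWle
      set below : X → ℝ := fun x => ∑ z ∈ P.filter (fun z => x ∈ (pt hT r z).support), w z
        with hbelow
      have hbr : below r = ∑ x ∈ P, w x := by
        rw [hbelow]
        simp only []
        rw [Finset.filter_true_of_mem (fun z _ => (pt hT r z).start_mem_support)]
      -- heavy vertices exist and have bounded depth
      have hbdd : ∀ x, t < below x → depth hT r x ≤ P.sup (depth hT r) := by
        intro x hx
        have hne : (P.filter (fun z => x ∈ (pt hT r z).support)).Nonempty := by
          by_contra h
          rw [Finset.not_nonempty_iff_eq_empty] at h
          rw [hbelow] at hx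
          simp only [h, Finset.sum_empty] at hx
          exact absurd hx (not_lt.mpr ht.le)
        obtain ⟨z, hz⟩ := hne
        rw [Finset.mem_filter] at hz
        exact le_trans (depth_le_of_mem_pt hT r hz.2) (Finset.le_sup hz.1)
      set DD : Set ℕ := {k | ∃ x, t < below x ∧ depth hT r x = k} with hDD
      have hDDne : (depth hT r r) ∈ DD := ⟨r, by rw [hbr]; exact hWle, rfl⟩
      have hbddDD : BddAbove DD := by
        refine ⟨P.sup (depth hT r), ?_⟩
        rintro k ⟨x, hx, rfl⟩
        exact hbdd x hx
      obtain ⟨x0, hx0heavy, hx0depth⟩ := Nat.sSup_mem ⟨_, hDDne⟩ hbddDD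
      have hmax : ∀ y, t < below y → depth hT r y ≤ depth hT r x0 := by
        intro y hy
        rw [hx0depth]
        exact le_csSup hbddDD ⟨y, hy, rfl⟩
      set P' := P.filter (fun z => x0 ∉ (pt hT r z).support) with hP'
      set w' : X → ℝ := fun z => if x0 ∈ (pt hT r z).support then 0 else w z with hw'
      have hw'nonneg : ∀ x, 0 ≤ w' x := by
        intro x
        rw [hw']
        dsimp only
        split
        · exact le_refl _
        · exact hw x
      have hw'0 : ∀ x ∉ P', w' x = 0 := by
        intro x hx
        rw [hw']
        dsimp only
        split
        · rfl
        · rename_i hxm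
          rw [hP', Finset.mem_filter, not_and] at hx
          exact hw0 x (fun hxP => absurd (hx hxP) (not_not.mpr hxm))
      have hcard' : P'.card ≤ n := by
        have hss : P' ⊂ P := by
          rw [hP']
          rw [Finset.filter_ssubset]
          have hne : (P.filter (fun z => x0 ∈ (pt hT r z).support)).Nonempty := by
            by_contra h
            rw [Finset.not_nonempty_iff_eq_empty] at h
            rw [hbelow] at hx0heavy
            simp only [h, Finset.sum_empty] at hx0heavy
            exact absurd hx0heavy (not_lt.mpr ht.le)
          obtain ⟨s, hs⟩ := hne
          rw [Finset.mem_filter] at hs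
          exact ⟨s, hs.1, not_not.mpr hs.2⟩
        have := Finset.card_lt_card hss
        omega
      obtain ⟨S', hS'card, hS'⟩ := ih P' w' hcard' hw'nonneg hw'0
      have hsum' : ∑ x ∈ P', w' x = (∑ x ∈ P, w x) - below x0 := by
        have h1 : ∑ x ∈ P', w' x = ∑ x ∈ P', w x := by
          refine Finset.sum_congr rfl (fun z hz => ?_)
          rw [hP', Finset.mem_filter] at hz
          rw [hw']
          dsimp only
          rw [if_neg hz.2]
        have h2 := Finset.sum_filter_add_sum_filter_not P
          (fun z => x0 ∈ (pt hT r z).support) w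
        rw [h1, hP']
        rw [hbelow]
        dsimp only
        linarith
      refine ⟨insert x0 S', ?_, ?_⟩
      · right
        have hcardle : (insert x0 S').card ≤ S'.card + 1 := Finset.card_insert_le _ _
        have hcast : ((insert x0 S').card : ℝ) ≤ (S'.card : ℝ) + 1 := by
          exact_mod_cast hcardle
        rcases hS'card with h0 | hlt
        · rw [h0] at hcast ⊢
          simp only [Finset.card_empty, Nat.cast_zero, zero_add] at hcast
          calc ((insert x0 (∅ : Finset X)).card : ℝ) * t ≤ 1 * t := by
                exact mul_le_mul_of_nonneg_right hcast ht.le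
            _ = t := one_mul t
            _ < ∑ x ∈ P, w x := hWle
        · rw [hsum'] at hlt
          have h3 : ((insert x0 S').card : ℝ) * t ≤ ((S'.card : ℝ) + 1) * t :=
            mul_le_mul_of_nonneg_right hcast ht.le
          have h4 : ((S'.card : ℝ) + 1) * t = (S'.card : ℝ) * t + t := by ring
          have h5 : t < below x0 := hx0heavy
          linarith
      · intro y hy
        rw [Finset.mem_insert, not_or] at hy
        obtain ⟨hynex, hynS'⟩ := hy
        by_cases hyB : x0 ∈ (pt hT r y).support
        · obtain ⟨y₁, hd, hkey⟩ := key hT r (Ne.symm hynex) hyB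
          have hy₁ : below y₁ ≤ t := by
            by_contra h
            push_neg at h
            exact absurd (hmax y₁ h) (not_le.mpr hd)
          refine le_trans ?_ hy₁
          rw [hbelow]
          dsimp only
          refine Finset.sum_le_sum_of_subset_of_nonneg ?_ (fun i _ _ => hw i)
          intro z hz
          rw [Finset.mem_filter] at hz ⊢
          refine ⟨hz.1, hkey z (areach_mono ?_ hz.2)⟩
          intro s hs
          rw [Finset.mem_singleton] at hs
          rw [hs]
          exact Finset.mem_insert_self _ _
        · have hstep : ∀ z, AReach T (insert x0 S') y z → x0 ∉ (pt hT r z).support := by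
            rintro z ⟨m, hm⟩ hmem
            have hx' := mem_of_mem_pt hT r hmem ((pt hT r y).append m)
            rw [Walk.mem_support_append_iff] at hx'
            rcases hx' with h1 | h1
            · exact hyB h1
            · exact hm x0 (Finset.mem_insert_self _ _) h1
          calc ∑ x ∈ P.filter (fun x => AReach T (insert x0 S') y x), w x
              = ∑ x ∈ P.filter (fun x => AReach T (insert x0 S') y x), w' x := by
                refine Finset.sum_congr rfl (fun z hz => ?_)
                rw [Finset.mem_filter] at hz
                rw [hw']
                dsimp only
                rw [if_neg (hstep z hz.2)]
            _ ≤ ∑ x ∈ P'.filter (fun x => AReach T S' y x), w' x := by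
                refine Finset.sum_le_sum_of_subset_of_nonneg ?_ (fun i _ _ => hw'nonneg i)
                intro z hz
                rw [Finset.mem_filter] at hz
                rw [Finset.mem_filter, hP', Finset.mem_filter]
                exact ⟨⟨hz.1, hstep z hz.2⟩,
                  areach_mono (Finset.subset_insert _ _) hz.2⟩
            _ ≤ t := hS' y hynS'

end TWaux

open TWaux

/-- Weighted separator lemma: given a tree decomposition of `H` and a positive weight
function `ξ`, for any integer `c > 1` there is a set `S_T` of at most `c` tree nodes
such that every component of `H` minus the union of their bags has total weight at most
`(1/c)` of the total. -/
theorem weighted_separator {V X : Type*} [Fintype V] (H : SimpleGraph V)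
    (T : SimpleGraph X) (hT : T.IsTree) (D : TreeDecomp H T)
    (ξ : V → ℝ) (hξ : ∀ v, 0 < ξ v) (c : ℕ) (hc : 1 < c) :
    ∃ S_T : Finset X, S_T.card ≤ c ∧
      ∀ C : (H.induce {v : V | v ∉ ⋃ x ∈ S_T, D.bag x}).ConnectedComponent,
        (∑ᶠ v ∈ {v : V | ∃ hv : v ∉ ⋃ x ∈ S_T, D.bag x,
            (H.induce {v : V | v ∉ ⋃ x ∈ S_T, D.bag x}).connectedComponentMk ⟨v, hv⟩ = C},
          ξ v) ≤ (1 / c) * ∑ v : V, ξ v := by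
  classical
  obtain ⟨r⟩ : Nonempty X := hT.isConnected.nonempty
  have hrep : ∀ v : V, ∃ x : X, v ∈ D.bag x := by
    intro v
    obtain ⟨⟨x, hx⟩⟩ := (D.subtree v).nonempty
    exact ⟨x, hx⟩
  choose rf hrf using hrep
  rcases isEmpty_or_nonempty V with hV | hV
  · refine ⟨∅, by simp, fun C => ?_⟩
    have hA : {v : V | ∃ hv : v ∉ ⋃ x ∈ (∅ : Finset X), D.bag x,
        (H.induce {v : V | v ∉ ⋃ x ∈ (∅ : Finset X), D.bag x}).connectedComponentMk ⟨v, hv⟩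
          = C} = ∅ := by
      ext v
      exact absurd trivial (hV.elim v)
    rw [hA, finsum_mem_empty]
    rw [Finset.univ_eq_empty, Finset.sum_empty, mul_zero]
  · have hc0 : (0 : ℝ) < (c : ℝ) := by exact_mod_cast Nat.zero_lt_of_lt hc
    set W := ∑ v : V, ξ v with hWdef
    have hWpos : 0 < W := Finset.sum_pos (fun v _ => hξ v) Finset.univ_nonempty
    set t : ℝ := W / c with htdef
    have ht : 0 < t := div_pos hWpos hc0
    set P : Finset X := Finset.univ.image rf with hPdef
    set w : X → ℝ := fun y => ∑ v ∈ Finset.univ.filter (fun v => rf v = y), ξ v with hwdef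
    have hwnonneg : ∀ x, 0 ≤ w x :=
      fun x => Finset.sum_nonneg (fun v _ => (hξ v).le)
    have hw0 : ∀ x ∉ P, w x = 0 := by
      intro x hx
      refine Finset.sum_eq_zero (fun v hv => ?_)
      rw [Finset.mem_filter] at hv
      exact absurd (hv.2 ▸ Finset.mem_image_of_mem rf (Finset.mem_univ v)) hx
    have hWsum : ∑ x ∈ P, w x = W := by
      rw [hwdef, hWdef]
      exact Finset.sum_fiberwise_of_maps_to
        (fun v _ => Finset.mem_image_of_mem rf (Finset.mem_univ v)) ξ
    obtain ⟨S, hScard, hSbound⟩ := treeCut hT r t ht P.card P w le_rfl hwnonneg hw0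
    refine ⟨S, ?_, ?_⟩
    · rcases hScard with h | h
      · rw [h]; simp
      · rw [hWsum] at h
        have hWt : W = (c : ℝ) * t := by
          rw [htdef]
          field_simp
        rw [hWt] at h
        have : (S.card : ℝ) < (c : ℝ) := lt_of_mul_lt_mul_right h ht.le
        exact (Nat.cast_lt.mp this).le
    · intro C
      have hnotbag : ∀ v : V, v ∈ {v : V | v ∉ ⋃ x ∈ S, D.bag x} → ∀ x ∈ S, v ∉ D.bag x := by
        intro v hv x hx hbag
        exact hv (Set.mem_biUnion hx hbag)
      have hrfS : ∀ v : V, v ∈ {v : V | v ∉ ⋃ x ∈ S, D.bag x} → rf v ∉ S :=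
        fun v hv hmem => hnotbag v hv _ hmem (hrf v)
      obtain ⟨⟨v₀, h₀⟩, hC⟩ := C.exists_rep
      have hbagReach : ∀ (v : V), v ∈ {v : V | v ∉ ⋃ x ∈ S, D.bag x} → ∀ x₁ x₂,
          v ∈ D.bag x₁ → v ∈ D.bag x₂ → AReach T S x₁ x₂ := by
        intro v hv x₁ x₂ h₁ h₂
        obtain ⟨q⟩ := (D.subtree v).preconnected ⟨x₁, h₁⟩ ⟨x₂, h₂⟩
        refine ⟨q.map (SimpleGraph.Embedding.induce {x | v ∈ D.bag x}).toHom, ?_⟩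
        intro s hs hsup
        replace hsup : s ∈ q.support.map (SimpleGraph.Embedding.induce (G := T) {x | v ∈ D.bag x}).toHom := by
          rw [← SimpleGraph.Walk.support_map]; exact hsup
        obtain ⟨⟨s', hs'⟩, -, rfl⟩ := List.mem_map.mp hsup
        exact hnotbag v hv s' hs hs'
      have hwalk : ∀ (a b : {v : V | v ∉ ⋃ x ∈ S, D.bag x}),
          (H.induce {v : V | v ∉ ⋃ x ∈ S, D.bag x}).Walk a b →
          AReach T S (rf a) (rf b) := by
        intro a b p
        induction p with
        | nil =>
          rename_i a'
          refine ⟨SimpleGraph.Walk.nil, fun s hs hsup => ?_⟩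
          rw [SimpleGraph.Walk.support_nil, List.mem_singleton] at hsup
          exact hrfS a' a'.2 (hsup ▸ hs)
        | cons hadj p ih =>
          rename_i a' u' b'
          have hHadj : H.Adj ↑a' ↑u' := hadj
          obtain ⟨x₀, hax, hux⟩ := D.covers hHadj
          refine areach_trans (areach_trans (b := x₀) ?_ ?_) ih
          · exact hbagReach ↑a' a'.2 (rf ↑a') x₀ (hrf _) hax
          · exact hbagReach ↑u' u'.2 x₀ (rf ↑u') hux (hrf _)
      have hy : rf v₀ ∉ S := hrfS v₀ h₀
      have hbound := hSbound (rf v₀) hy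
      have hAfin : Set.Finite {v : V | ∃ hv : v ∉ ⋃ x ∈ S, D.bag x,
          (H.induce {v : V | v ∉ ⋃ x ∈ S, D.bag x}).connectedComponentMk ⟨v, hv⟩ = C} :=
        Set.toFinite _
      have hAcoe : {v : V | ∃ hv : v ∉ ⋃ x ∈ S, D.bag x,
          (H.induce {v : V | v ∉ ⋃ x ∈ S, D.bag x}).connectedComponentMk ⟨v, hv⟩ = C}
          = (hAfin.toFinset : Set V) := (Set.Finite.coe_toFinset _).symm
      rw [hAcoe, finsum_mem_coe_finset]
      have hsub : hAfin.toFinset ⊆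
          Finset.univ.filter (fun v => AReach T S (rf v₀) (rf v)) := by
        intro v hv
        rw [Set.Finite.mem_toFinset] at hv
        obtain ⟨hv', hC'⟩ := hv
        have hreach : (H.induce {v : V | v ∉ ⋃ x ∈ S, D.bag x}).Reachable ⟨v, hv'⟩ ⟨v₀, h₀⟩ :=
          SimpleGraph.ConnectedComponent.exact (hC'.trans hC.symm)
        obtain ⟨p⟩ := hreach
        exact Finset.mem_filter.mpr ⟨Finset.mem_univ _, areach_symm (hwalk _ _ p)⟩
      have h1 : ∑ v ∈ hAfin.toFinset, ξ v
          ≤ ∑ v ∈ Finset.univ.filter (fun v => AReach T S (rf v₀) (rf v)), ξ v :=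
        Finset.sum_le_sum_of_subset_of_nonneg hsub (fun i _ _ => (hξ i).le)
      have hmaps : ∀ v ∈ Finset.univ.filter (fun v => AReach T S (rf v₀) (rf v)),
          rf v ∈ P.filter (fun x => AReach T S (rf v₀) x) := by
        intro v hv
        rw [Finset.mem_filter] at hv
        exact Finset.mem_filter.mpr
          ⟨Finset.mem_image_of_mem rf (Finset.mem_univ v), hv.2⟩
      have hfib := Finset.sum_fiberwise_of_maps_to hmaps ξ
      have h2 : ∑ v ∈ Finset.univ.filter (fun v => AReach T S (rf v₀) (rf v)), ξ v
          ≤ ∑ x ∈ P.filter (fun x => AReach T S (rf v₀) x), w x := by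
        rw [← hfib]
        refine Finset.sum_le_sum (fun y' hy' => ?_)
        refine Finset.sum_le_sum_of_subset_of_nonneg ?_ (fun i _ _ => (hξ i).le)
        exact Finset.filter_subset_filter _ (Finset.subset_univ _)
      have hfinal : t = (1 / (c : ℝ)) * W := by
        rw [htdef]; ring
      calc ∑ v ∈ hAfin.toFinset, ξ v
          ≤ ∑ x ∈ P.filter (fun x => AReach T S (rf v₀) x), w x := le_trans h1 h2
        _ ≤ t := hbound
        _ = (1 / (c : ℝ)) * W := hfinal
end

section
/- Define log^{(0)} x = x and log^{(i)} x = log(log^{(i−1)} x), and define the tower function τ(0) = 1, τ(i) = e^{τ(i−1)}. Then for every integer i ≥ 1, every real x > τ(i−1), and every a ≥ 0, log^{(i)}(x + a) ≤ log^{(i)} x + a / ∏_{j=0}^{i−1} log^{(j)} x. -/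
/-- The `i`-fold iterated natural logarithm. -/
noncomputable def iterLog : ℕ → ℝ → ℝ
  | 0, x => x
  | i + 1, x => Real.log (iterLog i x)

/-- The tower function: `tower 0 = 1`, `tower (i+1) = e^(tower i)`. -/
noncomputable def tower : ℕ → ℝ
  | 0 => 1
  | i + 1 => Real.exp (tower i)

lemma one_le_tower (n : ℕ) : 1 ≤ tower n := by
  induction n with
  | zero => simp [tower]
  | succ n ih =>
    have := Real.add_one_le_exp (tower n)
    simp only [tower]
    linarith

lemma tower_lt_succ (n : ℕ) : tower n < tower (n + 1) := by
  have := Real.add_one_le_exp (tower n)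
  simp only [tower]
  linarith

lemma tower_sub_lt_iterLog (k : ℕ) (x : ℝ) (hx : tower k < x) :
    ∀ m ≤ k, tower (k - m) < iterLog m x := by
  intro m hm
  induction m with
  | zero => simpa [iterLog] using hx
  | succ m ih =>
    have hm' : m ≤ k := Nat.le_of_succ_le hm
    have ih' := ih hm'
    have hkm : k - m = (k - (m + 1)) + 1 := by omega
    rw [hkm] at ih'
    simp only [tower] at ih'
    have : Real.log (Real.exp (tower (k - (m+1)))) < Real.log (iterLog m x) :=
      Real.log_lt_log (Real.exp_pos _) ih'
    simpa [iterLog, Real.log_exp] using this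

lemma log_add_le' (x a : ℝ) (hx : 0 < x) (ha : 0 ≤ a) :
    Real.log (x + a) ≤ Real.log x + a / x := by
  have h1 : Real.log ((x + a) / x) ≤ (x + a) / x - 1 :=
    Real.log_le_sub_one_of_pos (by positivity)
  rw [Real.log_div (by positivity) hx.ne'] at h1
  have h2 : (x + a) / x - 1 = a / x := by field_simp; ring
  linarith [h2 ▸ h1]

/-- For `i ≥ 1`, `x > τ(i−1)` and `a ≥ 0`,
`log^{(i)}(x+a) ≤ log^{(i)} x + a / ∏_{j=0}^{i−1} log^{(j)} x`. -/
theorem iterLog_add_le (i : ℕ) (hi : 1 ≤ i) (x a : ℝ) (hx : tower (i - 1) < x)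
    (ha : 0 ≤ a) :
    iterLog i (x + a) ≤ iterLog i x + a / ∏ j ∈ Finset.range i, iterLog j x := by
  induction i, hi using Nat.le_induction generalizing x a with
  | base =>
    norm_num [tower] at hx
    have hx0 : (0:ℝ) < x := by linarith
    simpa [iterLog, Finset.prod_range_one] using log_add_le' x a hx0 ha
  | succ n hn ih =>
    have hxn : tower n < x := by simpa using hx
    have htow : tower (n - 1) < tower n := by
      have := tower_lt_succ (n - 1)
      rwa [Nat.sub_add_cancel hn] at this
    have hx' : tower (n - 1) < x := lt_trans htow hxn
    have h1 := ih x a hx' ha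
    set P := ∏ j ∈ Finset.range n, iterLog j x with hP
    have hfac : ∀ j ∈ Finset.range n, 0 < iterLog j x := by
      intro j hj
      have hj' : j ≤ n := le_of_lt (Finset.mem_range.mp hj)
      have := tower_sub_lt_iterLog n x hxn j hj'
      have := one_le_tower (n - j)
      linarith
    have hPpos : 0 < P := Finset.prod_pos hfac
    have hL : 1 < iterLog n x := by
      have := tower_sub_lt_iterLog n x hxn n le_rfl
      simpa [tower] using this
    have hLa : 1 < iterLog n (x + a) := by
      have hxa : tower n < x + a := by linarith
      have := tower_sub_lt_iterLog n (x + a) hxa n le_rfl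
      simpa [tower] using this
    have step1 : Real.log (iterLog n (x + a)) ≤ Real.log (iterLog n x + a / P) :=
      Real.log_le_log (by linarith) h1
    have step2 : Real.log (iterLog n x + a / P) ≤
        Real.log (iterLog n x) + (a / P) / iterLog n x :=
      log_add_le' _ _ (by linarith) (div_nonneg ha hPpos.le)
    have hprod : ∏ j ∈ Finset.range (n + 1), iterLog j x = P * iterLog n x := by
      rw [Finset.prod_range_succ]
    have hdiv : (a / P) / iterLog n x = a / ∏ j ∈ Finset.range (n + 1), iterLog j x := by
      rw [hprod, div_div]
    calc iterLog (n + 1) (x + a) = Real.log (iterLog n (x + a)) := rfl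
      _ ≤ Real.log (iterLog n x + a / P) := step1
      _ ≤ Real.log (iterLog n x) + (a / P) / iterLog n x := step2
      _ = iterLog (n + 1) x + a / ∏ j ∈ Finset.range (n + 1), iterLog j x := by
          rw [hdiv]; rfl
end

section
/- Let H be a connected graph that is edge-maximal with respect to a width-t tree decomposition (B_x : x ∈ V(T)) rooted at r, and let L₀,…,L_m be the BFS layering of H with L₀ = B_r. Then for any i ∈ {1,…,m} and any connected component X of H[L_i ∪ ⋯ ∪ L_m], the number of vertices of L_{i−1} adjacent to X satisfies |L_{i−1} ∩ N_H(V(X))| ≤ t. -/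
open SimpleGraph


/-- `H` is edge-maximal with respect to the decomposition: every bag induces a clique. -/
def EdgeMaximal {V X : Type*} {G : SimpleGraph V} {T : SimpleGraph X}
    (D : TreeDecomp G T) : Prop :=
  ∀ x, ∀ u ∈ D.bag x, ∀ v ∈ D.bag x, u ≠ v → G.Adj u v

/-- `(L 0, …, L m)` is a BFS layering of `G`: a partition of the vertices such that every
vertex of `L i` is at distance exactly `i` from `L 0`. -/
def IsBFSLayering {V : Type*} (G : SimpleGraph V) (L : ℕ → Set V) (m : ℕ) : Prop :=
  (∀ v : V, ∃! i, i ≤ m ∧ v ∈ L i) ∧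
    ∀ i ≤ m, ∀ v ∈ L i, (∃ w ∈ L 0, G.dist v w = i) ∧ ∀ w ∈ L 0, i ≤ G.dist v w

section Aux

variable {V X : Type*}

/-- Appending two paths that only share the common endpoint yields a path. -/
lemma myIsPath_append {G : SimpleGraph V} {a b c : V} {p : G.Walk a b} {q : G.Walk b c}
    (hp : p.IsPath) (hq : q.IsPath) (h : ∀ u, u ∈ p.support → u ∈ q.support → u = b) :
    (p.append q).IsPath := by
  rw [Walk.isPath_def, Walk.support_append]
  refine List.Nodup.append hp.support_nodup ?_ ?_
  · have := hq.support_nodup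
    rw [q.support_eq_cons] at this
    exact this.of_cons
  · intro u hu hu'
    have hmem : u ∈ q.support := by
      rw [q.support_eq_cons]; exact List.mem_cons_of_mem _ hu'
    have hub := h u hu hmem
    subst hub
    have := hq.support_nodup
    rw [q.support_eq_cons] at this
    exact (List.nodup_cons.mp this).1 hu'

/-- A walk in an induced subgraph yields a walk in the ambient graph whose support
stays inside the inducing set (indeed inside the original support). -/
lemma walk_out {G : SimpleGraph V} {s : Set V} {a b : s}
    (p : (G.induce s).Walk a b) :
    ∃ q : G.Walk a b, ∀ v ∈ q.support, ∃ c ∈ p.support, (c : V) = v := by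
  refine ⟨p.map (SimpleGraph.Embedding.induce s).toHom, ?_⟩
  intro v hv
  have hv2 : v ∈ (p.map (SimpleGraph.Embedding.induce s).toHom).support := hv
  rw [Walk.support_map, List.mem_map] at hv2
  obtain ⟨u, hu, rfl⟩ := hv2
  exact ⟨u, hu, rfl⟩

/-- `x` lies on every path from `y` to `z`. -/
def OnP (T : SimpleGraph X) (x y z : X) : Prop :=
  ∀ p : T.Walk y z, p.IsPath → x ∈ p.support

lemma onP_of_path {T : SimpleGraph X} (hac : T.IsAcyclic) {x y z : X}
    (p : T.Walk y z) (hp : p.IsPath) (hx : x ∈ p.support) : OnP T x y z := by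
  intro q hq
  have h := hac.path_unique ⟨p, hp⟩ ⟨q, hq⟩
  have : p = q := congrArg Subtype.val h
  rwa [this] at hx

lemma onP_split {T : SimpleGraph X} (hT : T.IsTree) {x y z : X} (q : X) (h : OnP T x y z) :
    OnP T x y q ∨ OnP T x q z := by
  classical
  obtain ⟨w₁⟩ := hT.isConnected.preconnected y q
  obtain ⟨w₂⟩ := hT.isConnected.preconnected q z
  have hx := h ((w₁.bypass.append w₂.bypass).bypass) (Walk.bypass_isPath _)
  have hx' := Walk.support_bypass_subset _ hx
  rw [Walk.mem_support_append_iff] at hx'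
  rcases hx' with hx' | hx'
  · exact Or.inl (onP_of_path hT.IsAcyclic _ (Walk.bypass_isPath _) hx')
  · exact Or.inr (onP_of_path hT.IsAcyclic _ (Walk.bypass_isPath _) hx')

/-- The set of bags containing a fixed vertex is walk-connected in `T`. -/
lemma bag_walk {G : SimpleGraph V} {T : SimpleGraph X} (D : TreeDecomp G T)
    (v : V) {y z : X} (hy : v ∈ D.bag y) (hz : v ∈ D.bag z) :
    ∃ W : T.Walk y z, ∀ q ∈ W.support, v ∈ D.bag q := by
  obtain ⟨w⟩ := (D.subtree v).preconnected ⟨y, hy⟩ ⟨z, hz⟩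
  obtain ⟨q, hq⟩ := walk_out w
  exact ⟨q, fun u hu => by obtain ⟨⟨c, hc⟩, _, rfl⟩ := hq u hu; exact hc⟩

/-- If `v` is in bags `y` and `z` then `v` is in every bag on the tree-path. -/
lemma bag_path_closed {G : SimpleGraph V} {T : SimpleGraph X}
    (D : TreeDecomp G T) {v : V} {x y z : X} (hy : v ∈ D.bag y) (hz : v ∈ D.bag z)
    (hx : OnP T x y z) : v ∈ D.bag x := by
  obtain ⟨W, hW⟩ := bag_walk D v hy hz
  classical
  have hxW := hx W.bypass (Walk.bypass_isPath _)
  exact hW x (Walk.support_bypass_subset _ hxW)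

/-- Hitting lemma: a walk in `G` between vertices in bags `y` and `z` meets
every bag on the tree-path from `y` to `z`. -/
lemma walk_hits_bag {G : SimpleGraph V} {T : SimpleGraph X} (hT : T.IsTree)
    (D : TreeDecomp G T) {x : X} :
    ∀ {a b : V} (W : G.Walk a b) {y z : X}, a ∈ D.bag y → b ∈ D.bag z →
      OnP T x y z → ∃ q ∈ W.support, q ∈ D.bag x := by
  intro a b W
  induction W with
  | nil =>
    intro y z hy hz hx
    exact ⟨_, by simp, bag_path_closed D hy hz hx⟩
  | cons h p ih =>
    intro y z hy hz hx
    obtain ⟨q, hq1, hq2⟩ := D.covers h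
    rcases onP_split hT q hx with h' | h'
    · exact ⟨_, by simp, bag_path_closed D hy hq1 h'⟩
    · obtain ⟨u, hu, hub⟩ := ih hq2 hz h'
      exact ⟨u, by simp [hu], hub⟩

/-- Vertices other than the start of a walk to `w` are closer to `w`. -/
lemma support_dist_le {G : SimpleGraph V} {w : V} :
    ∀ {a : V} (p : G.Walk a w) (q : V), q ∈ p.support →
      q = a ∨ (1 ≤ p.length ∧ G.dist q w ≤ p.length - 1) := by
  intro a p
  induction p with
  | nil => intro q hq; left; simpa using (by simpa using hq : q = _)
  | @cons a c w h p ih =>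
    intro q hq
    rw [Walk.support_cons, List.mem_cons] at hq
    rcases hq with rfl | hq
    · exact Or.inl rfl
    · right
      classical
      refine ⟨by simp, ?_⟩
      have h3 : G.dist q w ≤ (p.dropUntil q hq).length := SimpleGraph.dist_le _
      have h4 := Walk.length_dropUntil_le p hq
      simp only [Walk.length_cons]
      omega

/-- A connected set of nodes of a tree has a "gate" towards `r`: a node lying on
every path from the set to `r`. -/
lemma exists_gate {T : SimpleGraph X} (hT : T.IsTree) (r : X) (TX : Set X)
    (hne : TX.Nonempty)
    (hconn : ∀ y ∈ TX, ∀ z ∈ TX, ∃ W : T.Walk y z, ∀ q ∈ W.support, q ∈ TX) :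
    ∃ x ∈ TX, ∀ y ∈ TX, OnP T x y r := by
  classical
  set S : Set ℕ := {d | ∃ y ∈ TX, T.dist r y = d} with hS
  have hSne : S.Nonempty := ⟨_, hne.choose, hne.choose_spec, rfl⟩
  obtain ⟨x, hxTX, hxd⟩ := Nat.sInf_mem hSne
  refine ⟨x, hxTX, ?_⟩
  intro y hy
  obtain ⟨p0, hp0len⟩ := (hT.isConnected.preconnected x r).exists_walk_length_eq_dist
  have hPpath : p0.bypass.IsPath := p0.bypass_isPath
  have hPlen : p0.bypass.length = T.dist x r :=
    le_antisymm (le_trans (Walk.length_bypass_le p0) hp0len.le) (SimpleGraph.dist_le _)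
  have hPTX : ∀ z ∈ p0.bypass.support, z ∈ TX → z = x := by
    intro z hz hzTX
    by_contra hzx
    have h1 : (p0.bypass.takeUntil z hz).length + (p0.bypass.dropUntil z hz).length
        = p0.bypass.length := by
      rw [← Walk.length_append, Walk.take_spec]
    have h2 : 1 ≤ (p0.bypass.takeUntil z hz).length := by
      by_contra hcon
      push_neg at hcon
      exact hzx (Walk.eq_of_length_eq_zero
        (p := p0.bypass.takeUntil z hz) (by omega)).symm
    have h3 : T.dist z r ≤ (p0.bypass.dropUntil z hz).length := SimpleGraph.dist_le _
    have hmem : T.dist r z ∈ S := ⟨z, hzTX, rfl⟩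
    have h4 : T.dist r x ≤ T.dist r z := by rw [hxd]; exact Nat.sInf_le hmem
    rw [SimpleGraph.dist_comm (u := r) (v := x)] at h4
    rw [SimpleGraph.dist_comm (u := z) (v := r)] at h3
    omega
  obtain ⟨W, hW⟩ := hconn y hy x hxTX
  have hQTX : ∀ q ∈ W.bypass.support, q ∈ TX := fun q hq => hW q (Walk.support_bypass_subset _ hq)
  have happ : (W.bypass.append p0.bypass).IsPath :=
    myIsPath_append (Walk.bypass_isPath _) hPpath (fun u hu hu' => hPTX u hu' (hQTX u hu))
  exact onP_of_path hT.IsAcyclic _ happ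
    (by rw [Walk.mem_support_append_iff]; exact Or.inl (Walk.end_mem_support _))

/-- Bags meeting a (walk-)connected set of vertices of `G` form a walk-connected
set of nodes of `T`. -/
lemma walk_bags_connected {G : SimpleGraph V} {T : SimpleGraph X} (D : TreeDecomp G T)
    (Xs : Set V) :
    ∀ {v v' : V} (p : G.Walk v v'), (∀ q ∈ p.support, q ∈ Xs) →
      ∀ {y z : X}, v ∈ D.bag y → v' ∈ D.bag z →
      ∃ W : T.Walk y z, ∀ q ∈ W.support, ∃ u ∈ Xs, u ∈ D.bag q := by
  intro v v' p
  induction p with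
  | nil =>
    intro hsup y z hy hz
    obtain ⟨W, hW⟩ := bag_walk D _ hy hz
    exact ⟨W, fun q hq => ⟨_, hsup _ (by simp), hW q hq⟩⟩
  | @cons v c v' h p ih =>
    intro hsup y z hy hz
    obtain ⟨q', hq1, hq2⟩ := D.covers h
    obtain ⟨W₁, hW₁⟩ := bag_walk D v hy hq1
    obtain ⟨W₂, hW₂⟩ := ih (fun u hu => hsup u (by simp [hu])) hq2 hz
    refine ⟨W₁.append W₂, fun q hq => ?_⟩
    rw [Walk.mem_support_append_iff] at hq
    rcases hq with hq | hq
    · exact ⟨v, hsup v (by simp), hW₁ q hq⟩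
    · exact hW₂ q hq

end Aux

/-- Main auxiliary lemma, with the union of layers abstracted as `J`. -/
lemma up_neighbours_aux {V X : Type*} [Fintype V] (H : SimpleGraph V) (hconn : H.Connected)
    (T : SimpleGraph X) (hT : T.IsTree) (D : TreeDecomp H T) (t : ℕ)
    (hwidth : ∀ x, (D.bag x).ncard ≤ t + 1) (hmax : EdgeMaximal D)
    (r : X) (L : ℕ → Set V) (m : ℕ) (hL : IsBFSLayering H L m) (hL0 : L 0 = D.bag r)
    (i : ℕ) (hi1 : 1 ≤ i) (him : i ≤ m)
    (J : Set V) (hJdef : J = ⋃ j ∈ Finset.Icc i m, L j)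
    (C : (H.induce J).ConnectedComponent) :
    {u ∈ L (i - 1) | ∃ (w : V) (hw : w ∈ J),
        (H.induce J).connectedComponentMk ⟨w, hw⟩ = C ∧
          H.Adj u w}.ncard ≤ t := by
  classical
  obtain ⟨hpart, hdist⟩ := hL
  choose ℓ h1 h2 using hpart
  -- the component as a set of vertices
  set Xs : Set V := {v | ∃ h : v ∈ J, (H.induce J).connectedComponentMk ⟨v, h⟩ = C} with hXs
  have hXsJ : ∀ v ∈ Xs, v ∈ J := fun v hv => hv.1
  -- layer facts
  have hlayer : ∀ v ∈ J, i ≤ ℓ v := by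
    intro v hv
    rw [hJdef, Set.mem_iUnion₂] at hv
    obtain ⟨j, hj, hvj⟩ := hv
    rw [Finset.mem_Icc] at hj
    have := h2 v j ⟨hj.2, hvj⟩
    omega
  -- walks inside the component
  have compwalk : ∀ v ∈ Xs, ∀ v' ∈ Xs, ∃ p : H.Walk v v', ∀ q ∈ p.support, q ∈ Xs := by
    rintro v ⟨hv, hvC⟩ v' ⟨hv', hv'C⟩
    obtain ⟨w⟩ := ConnectedComponent.exact (hvC.trans hv'C.symm)
    have hsupC : ∀ s ∈ w.support, (H.induce J).connectedComponentMk s = C := by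
      intro s hs
      have : (H.induce J).Reachable ⟨v, hv⟩ s := ⟨w.takeUntil s hs⟩
      exact (ConnectedComponent.sound this).symm.trans hvC
    obtain ⟨p, hp⟩ := walk_out w
    refine ⟨p, fun q hq => ?_⟩
    obtain ⟨⟨c, hc⟩, hcs, rfl⟩ := hp q hq
    exact ⟨hc, hsupC _ hcs⟩
  -- the set of bags meeting the component
  set TX : Set X := {q : X | ∃ u ∈ Xs, u ∈ D.bag q} with hTX
  have hbagXs : ∀ v ∈ Xs, ∀ q : X, v ∈ D.bag q → q ∈ TX := fun v hv q hq => ⟨v, hv, hq⟩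
  -- TX is nonempty
  obtain ⟨⟨w₀, hw₀J⟩, hw₀C⟩ := C.exists_rep
  have hw₀Xs : w₀ ∈ Xs := ⟨hw₀J, hw₀C⟩
  obtain ⟨⟨y₀, hy₀⟩⟩ := (D.subtree w₀).nonempty
  have hTXne : TX.Nonempty := ⟨y₀, w₀, hw₀Xs, hy₀⟩
  -- TX is walk-connected
  have hTXconn : ∀ y ∈ TX, ∀ z ∈ TX, ∃ W : T.Walk y z, ∀ q ∈ W.support, q ∈ TX := by
    rintro y ⟨v, hvXs, hvy⟩ z ⟨v', hv'Xs, hv'z⟩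
    obtain ⟨p, hp⟩ := compwalk v hvXs v' hv'Xs
    obtain ⟨W, hW⟩ := walk_bags_connected D Xs p hp hvy hv'z
    exact ⟨W, fun q hq => hW q hq⟩
  -- the gate bag
  obtain ⟨x, hxTX, hgate⟩ := exists_gate hT r TX hTXne hTXconn
  obtain ⟨w₀x, hw₀xXs, hw₀xbag⟩ := hxTX
  have hw₀xi : i ≤ ℓ w₀x := hlayer _ (hXsJ _ hw₀xXs)
  -- every vertex of the gate bag has layer ≥ i - 1
  have hbag_layer : ∀ q ∈ D.bag x, i ≤ ℓ q + 1 := by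
    intro q hq
    by_cases hqe : q = w₀x
    · subst hqe; omega
    · have hadj : H.Adj q w₀x := hmax x q hq w₀x hw₀xbag hqe
      obtain ⟨wq, hwqL0, hwqd⟩ := (hdist (ℓ q) (h1 q).1 q (h1 q).2).1
      obtain ⟨pq, hpqlen⟩ := (hconn.preconnected q wq).exists_walk_length_eq_dist
      have hd : H.dist w₀x wq ≤ ℓ q + 1 := by
        have := SimpleGraph.dist_le (Walk.cons hadj.symm pq)
        rw [Walk.length_cons, hpqlen, hwqd] at this
        exact this
      have := (hdist (ℓ w₀x) (h1 w₀x).1 w₀x (h1 w₀x).2).2 wq hwqL0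
      omega
  -- the neighbour set is contained in the gate bag minus w₀x
  have hsub : {u ∈ L (i - 1) | ∃ (w : V) (hw : w ∈ J),
      (H.induce J).connectedComponentMk ⟨w, hw⟩ = C ∧ H.Adj u w} ⊆ D.bag x \ {w₀x} := by
    rintro u ⟨huL, w, hwJ, hwC, hadj⟩
    have hwXs : w ∈ Xs := ⟨hwJ, hwC⟩
    have him1 : i - 1 ≤ m := by omega
    have hℓu : ℓ u = i - 1 := (h2 u (i - 1) ⟨him1, huL⟩).symm
    obtain ⟨y, huy, hwy⟩ := D.covers hadj
    have hyTX : y ∈ TX := hbagXs w hwXs y hwy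
    obtain ⟨w', hw'L0, hw'd⟩ := (hdist (i - 1) him1 u huL).1
    obtain ⟨p, hplen⟩ := (hconn.preconnected u w').exists_walk_length_eq_dist
    have hw'r : w' ∈ D.bag r := hL0 ▸ hw'L0
    obtain ⟨q, hqsup, hqbag⟩ := walk_hits_bag hT D p huy hw'r (hgate y hyTX)
    have hqx : q = u := by
      rcases support_dist_le p q hqsup with h | ⟨hge1, hdle⟩
      · exact h
      · exfalso
        rw [hplen, hw'd] at hge1 hdle
        have hq1 : ℓ q ≤ H.dist q w' := (hdist (ℓ q) (h1 q).1 q (h1 q).2).2 w' hw'L0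
        have hq2 : i ≤ ℓ q + 1 := hbag_layer q hqbag
        omega
    subst hqx
    refine ⟨hqbag, ?_⟩
    intro hqe
    rw [Set.mem_singleton_iff] at hqe
    subst hqe
    omega
  calc {u ∈ L (i - 1) | ∃ (w : V) (hw : w ∈ J),
        (H.induce J).connectedComponentMk ⟨w, hw⟩ = C ∧ H.Adj u w}.ncard
      ≤ (D.bag x \ {w₀x}).ncard := Set.ncard_le_ncard hsub (Set.toFinite _)
    _ = (D.bag x).ncard - 1 := Set.ncard_diff_singleton_of_mem hw₀xbag
    _ ≤ t := by have := hwidth x; omega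

/-- For a connected graph `H` edge-maximal with respect to a width-`t` rooted tree
decomposition, with BFS layering starting at the root bag, each component `C` of the
graph induced on layers `i,…,m` has at most `t` neighbours in layer `i−1`. -/
theorem up_neighbours {V X : Type*} [Fintype V] (H : SimpleGraph V) (hconn : H.Connected)
    (T : SimpleGraph X) (hT : T.IsTree) (D : TreeDecomp H T) (t : ℕ)
    (hwidth : ∀ x, (D.bag x).ncard ≤ t + 1) (hmax : EdgeMaximal D)
    (r : X) (L : ℕ → Set V) (m : ℕ) (hL : IsBFSLayering H L m) (hL0 : L 0 = D.bag r)
    (i : ℕ) (hi1 : 1 ≤ i) (him : i ≤ m)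
    (C : (H.induce (⋃ j ∈ Finset.Icc i m, L j)).ConnectedComponent) :
    {u ∈ L (i - 1) | ∃ (w : V) (hw : w ∈ ⋃ j ∈ Finset.Icc i m, L j),
        (H.induce (⋃ j ∈ Finset.Icc i m, L j)).connectedComponentMk ⟨w, hw⟩ = C ∧
          H.Adj u w}.ncard ≤ t :=
  up_neighbours_aux H hconn T hT D t hwidth hmax r L m hL hL0 i hi1 him _ rfl C
end
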